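/- arXiv:1401.1444 — 5 statements merged into one kernel-verified Lean document; each statement's English description precedes it below -/
import Mathlib

section
/- Let r and s be positive integers satisfying one of the following: (a) r \equiv 2 (mod 3) and s \equiv 2 (mod 6); (b) r \equiv 0 (mod 3) and s \equiv 0 (mod 3); (c) r \equiv 1 (mod 3), r \ge 4, and s \equiv 4 (mod 6). Then for every nonnegative integer n with 3-adic expansion n = n_0 + 3 n_1 + 3^2 n_2 + \cdots + 3^m n_m (0 \le n_i \le 2), one has a_n(r,s) \equiv \prod_{i=0}^{m} a_{n_i}(r,s) (mod 9). -/
open Finset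

/-- The generalised Apéry numbers `a_n(r,s) = ∑_{k=0}^n C(n,k)^r C(n+k,k)^s`. -/
def apery (r s n : ℕ) : ℕ :=
  ∑ k ∈ Finset.range (n + 1), n.choose k ^ r * (n + k).choose k ^ s

namespace AperyAux

open Nat

lemma nine_mul (x : ZMod 9) : 9 * x = 0 := by
  have h : (9 : ZMod 9) = 0 := by decide
  rw [h, zero_mul]

lemma pw (r : ℕ) (t : ZMod 9) : (1 + 3*t)^r = 1 + 3*r*t := by
  induction r with
  | zero => simp
  | succ n ih =>
      rw [pow_succ, ih]
      push_cast
      linear_combination nine_mul ((n : ZMod 9) * t^2)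

/-- product of the units in the first `m` blocks of three -/
def PP : ℕ → ℕ
  | 0 => 1
  | m+1 => PP m * ((3*m+1)*(3*m+2))

/-- the partial block: product of `3m+1, …, 3m+t` -/
def ww (m : ℕ) : ℕ → ℕ
  | 0 => 1
  | 1 => 3*m+1
  | _+2 => (3*m+1)*(3*m+2)

lemma fac3_0 (m : ℕ) : (3*m)! = 3^m * m ! * PP m := by
  induction m with
  | zero => simp [PP]
  | succ n ih =>
      have h : 3*(n+1) = (3*n) + 1 + 1 + 1 := by ring
      rw [h, factorial_succ, factorial_succ, factorial_succ, ih, PP, pow_succ, factorial_succ]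
      ring

lemma fac3 (m t : ℕ) (ht : t ≤ 2) : (3*m+t)! = 3^m * m ! * PP m * ww m t := by
  interval_cases t
  · simpa [ww] using fac3_0 m
  · rw [factorial_succ, fac3_0, ww]; ring
  · show (3*m+1+1)! = _
    rw [factorial_succ, factorial_succ, fac3_0]; show _ = _*((3*m+1)*(3*m+2)); ring

lemma star (a c b e : ℕ) (hca : c ≤ a) (heb : e ≤ b) (hb : b ≤ 2) :
    (3*a+b).choose (3*c+e) * (PP c * ww c e) * (PP (a-c) * ww (a-c) (b-e)) =
      a.choose c * (PP a * ww a b) := by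
  have h1 : 3*c+e ≤ 3*a+b := by omega
  have e1 := Nat.choose_mul_factorial_mul_factorial h1
  have h2 : (3*a+b) - (3*c+e) = 3*(a-c)+(b-e) := by omega
  rw [h2] at e1
  have e2 := Nat.choose_mul_factorial_mul_factorial hca
  have hK : 0 < 3^a * (c ! * (a-c)!) := by positivity
  refine Nat.eq_of_mul_eq_mul_right hK ?_
  have hsplit : (3:ℕ)^a = 3^c * 3^(a-c) := by
    rw [← pow_add]; congr 1; omega
  calc (3*a+b).choose (3*c+e) * (PP c * ww c e) * (PP (a-c) * ww (a-c) (b-e)) *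
        (3^a * (c ! * (a-c)!))
      = (3*a+b).choose (3*c+e) * ((3^c * c ! * PP c * ww c e) *
          (3^(a-c) * (a-c)! * PP (a-c) * ww (a-c) (b-e))) := by rw [hsplit]; ring
    _ = (3*a+b).choose (3*c+e) * ((3*c+e)! * (3*(a-c)+(b-e))!) := by
          rw [← fac3 c e (le_trans heb hb), ← fac3 (a-c) (b-e) (by omega)]
    _ = (3*a+b)! := by rw [← e1]; ring
    _ = 3^a * a ! * PP a * ww a b := fac3 a b hb
    _ = a.choose c * (PP a * ww a b) * (3^a * (c ! * (a-c)!)) := by rw [← e2]; ring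

lemma PP_cast (m : ℕ) : ((PP m : ℕ) : ZMod 9) = 2^m := by
  induction m with
  | zero => simp [PP]
  | succ n ih =>
      rw [PP, pow_succ]
      push_cast
      rw [ih]
      linear_combination nine_mul ((2:ZMod 9)^n * (n^2+n))

/-- the mod 9 version of `star`, with the powers of two cancelled -/
lemma keyZ (a c b e : ℕ) (hca : c ≤ a) (heb : e ≤ b) (hb : b ≤ 2) :
    ((3*a+b).choose (3*c+e) : ZMod 9) * ((ww c e : ℕ) * (ww (a-c) (b-e) : ℕ)) =
      (a.choose c : ZMod 9) * (ww a b : ℕ) := by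
  have h := congrArg (fun x : ℕ => (x : ZMod 9)) (star a c b e hca heb hb)
  simp only [Nat.cast_mul] at h
  rw [PP_cast, PP_cast, PP_cast] at h
  have hu : IsUnit ((2:ZMod 9)^a) := (IsUnit.of_mul_eq_one (a := (2:ZMod 9)) 5 (by decide)).pow a
  apply hu.mul_left_cancel
  have hsplit : (2:ZMod 9)^a = 2^c * 2^(a-c) := by rw [← pow_add]; congr 1; omega
  calc (2:ZMod 9)^a * (((3*a+b).choose (3*c+e) : ZMod 9) * ((ww c e : ℕ) * (ww (a-c) (b-e) : ℕ)))
      = ((3*a+b).choose (3*c+e) : ZMod 9) * (2^c * (ww c e : ℕ)) *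
          (2^(a-c) * (ww (a-c) (b-e) : ℕ)) := by rw [hsplit]; ring
    _ = (a.choose c : ZMod 9) * (2^a * (ww a b : ℕ)) := by rw [← h]
    _ = 2^a * ((a.choose c : ZMod 9) * (ww a b : ℕ)) := by ring

lemma alg10 (X C c d : ZMod 9) (h : X*(3*d+1) = C*(3*(c+d)+1)) : X = C*(1+3*c) := by
  linear_combination (1-3*d)*h + nine_mul (X*d^2 - C*(c*d+d^2))

lemma alg11 (X C c d : ZMod 9) (h : X*(3*c+1) = C*(3*(c+d)+1)) : X = C*(1+3*d) := by
  linear_combination (1-3*c)*h + nine_mul (X*c^2 - C*(c^2+c*d))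

lemma alg20 (X C c d : ZMod 9) (h : X*((3*d+1)*(3*d+2)) = C*((3*(c+d)+1)*(3*(c+d)+2))) :
    X = C := by
  linear_combination 5*h + nine_mul (C*(1+5*c+5*c^2+10*c*d+5*d+5*d^2) - X*(1+5*d+5*d^2))

lemma algY11 (Y A c d : ZMod 9)
    (h : Y*((3*c+1)*(3*(c+d)+1)) = A*((3*(2*c+d)+1)*(3*(2*c+d)+2))) :
    Y = A*(2*(1-3*(2*c+d))) := by
  linear_combination (1-3*c)*(1-3*(c+d))*h + nine_mul
    (2*A*c - 6*A*c^2 - 6*A*c^3 + 36*A*c^4 + 72*A*c^3*d - 9*A*c^2*d + 45*A*c^2*d^2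
      - 6*A*c*d - 9*A*c*d^2 + 9*A*c*d^3 + A*d - 2*A*d^2 - 3*A*d^3
      + 2*Y*c^2 - 9*Y*c^4 - 18*Y*c^3*d - 9*Y*c^2*d^2 + 2*Y*c*d + Y*d^2)

lemma van (r N K : ℕ) (h2r : 2 ≤ r) (h0 : (N % 3).choose (K % 3) = 0) :
    ((N.choose K : ZMod 9))^r = 0 := by
  have hl := Choose.choose_modEq_choose_mod_mul_choose_div (n := N) (k := K) (p := 3)
  have h3 : ((N.choose K : ℕ) : ZMod 3) = 0 := by
    have := (ZMod.intCast_eq_intCast_iff _ _ _).mpr hl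
    push_cast at this
    rw [this, h0]
    push_cast
    ring
  obtain ⟨m, hm⟩ := (ZMod.natCast_eq_zero_iff _ _).mp h3
  obtain ⟨t, ht⟩ : ∃ t, r = t + 2 := ⟨r - 2, by omega⟩
  rw [hm, ht]
  push_cast
  rw [mul_pow, pow_add]
  have h9 : ((3:ZMod 9))^2 = 0 := by decide
  rw [h9]
  ring

lemma bracket1 (r s : ℕ)
    (hcond : (∃ S u, s = 2*S ∧ r + 2*s = 3*u) ∨ (3 ∣ r ∧ 3 ∣ s)) (c d : ZMod 9) :
    (1+3*c)^r * (1+3*c)^s + (1+3*d)^r * (2*(1-3*(2*c+d)))^s = 1 + 2^s := by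
  have e1 : (1 - 3*((2:ZMod 9)*c+d)) = 1+3*(-(2*c+d)) := by ring
  rw [pw r c, pw s c, e1, mul_pow, pw s (-(2*c+d)), pw r d]
  rcases hcond with ⟨S, u, hS, hu⟩ | ⟨⟨R, hR⟩, ⟨S, hSS⟩⟩
  · have h2 : (2:ZMod 9)^s = 1+3*S := by
      rw [hS, pow_mul]
      have h4 : ((2:ZMod 9)^2) = 1+3*1 := by decide
      rw [h4, pw S 1]; ring
    have hsc : ((s:ℕ) : ZMod 9) = 2*S := by rw [hS]; push_cast; ring
    have hrc : ((r:ℕ) : ZMod 9) = 3*u - 4*S := by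
      have := congrArg (fun x : ℕ => (x : ZMod 9)) hu
      push_cast at this
      rw [hsc] at this
      linear_combination this
    rw [h2, hsc, hrc]
    linear_combination nine_mul
      (48*(S:ZMod 9)^3*c*d + 24*S^3*d^2 - 36*S^2*(u:ZMod 9)*c*d - 18*S^2*u*d^2
        - 4*S^2*c - 8*S^2*c^2 + 16*S^2*c*d - 6*S^2*d + 8*S^2*d^2
        + 6*S*u*c^2 - 12*S*u*c*d + 3*S*u*d - 6*S*u*d^2
        - 2*S*c - 2*S*d + u*c + u*d)
  · rw [hR, hSS]
    push_cast
    linear_combination nine_mul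
      ((R:ZMod 9)*c + (S:ZMod 9)*c + 9*R*S*c^2
        + (2:ZMod 9)^(3*S)*(R*d - 2*S*c - S*d - 18*R*S*c*d - 9*R*S*d^2))

lemma apery_zero (r s : ℕ) : apery r s 0 = 1 := by simp [apery]

lemma apery_one (r s : ℕ) : ((apery r s 1 : ℕ) : ZMod 9) = 1 + 2^s := by
  have h : apery r s 1 = 1 + 2^s := by
    simp [apery, Finset.sum_range_succ]
  rw [h]; push_cast; ring

lemma apery_two (r s : ℕ) (h2s : 2 ≤ s) : ((apery r s 2 : ℕ) : ZMod 9) = 1 := by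
  have h : apery r s 2 = 1 + 2^r * 3^s + 6^s := by
    have h42 : Nat.choose 4 2 = 6 := by decide
    have h31 : Nat.choose 3 1 = 3 := by decide
    simp [apery, Finset.sum_range_succ, h42, h31]
  rw [h]
  obtain ⟨t, ht⟩ : ∃ t, s = t + 2 := ⟨s - 2, by omega⟩
  subst ht
  push_cast
  rw [pow_add, pow_add]
  have h1 : ((3:ZMod 9))^2 = 0 := by decide
  have h2 : ((6:ZMod 9))^2 = 0 := by decide
  rw [h1, h2]
  ring

lemma sum3 {M : Type*} [AddCommMonoid M] (f : ℕ → M) (N : ℕ) :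
    ∑ k ∈ range (3*N), f k = ∑ c ∈ range N, (f (3*c) + f (3*c+1) + f (3*c+2)) := by
  induction N with
  | zero => simp
  | succ n ih =>
      have h : 3*(n+1) = 3*n+1+1+1 := by ring
      rw [h, Finset.sum_range_succ, Finset.sum_range_succ, Finset.sum_range_succ, ih,
        Finset.sum_range_succ]
      abel

lemma cell (r s : ℕ) (h2r : 2 ≤ r) (h2s : 2 ≤ s)
    (hcond : (∃ S u, s = 2*S ∧ r + 2*s = 3*u) ∨ (3 ∣ r ∧ 3 ∣ s))
    (b : ℕ) (hb : b ≤ 2) (c d : ℕ) :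
    (((3*(c+d)+b).choose (3*c) : ZMod 9))^r * (((3*(c+d)+b+3*c).choose (3*c) : ZMod 9))^s
      + (((3*(c+d)+b).choose (3*c+1) : ZMod 9))^r *
          (((3*(c+d)+b+(3*c+1)).choose (3*c+1) : ZMod 9))^s
      + (((3*(c+d)+b).choose (3*c+2) : ZMod 9))^r *
          (((3*(c+d)+b+(3*c+2)).choose (3*c+2) : ZMod 9))^s
    = ((c+d).choose c : ZMod 9)^r * ((c+d+c).choose c : ZMod 9)^s * ((apery r s b : ℕ) : ZMod 9) := by
  have hca : c ≤ c + d := by omega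
  have hca2 : c ≤ c + d + c := by omega
  have hsub : c + d - c = d := by omega
  have hsub2 : c + d + c - c = c + d := by omega
  interval_cases b
  · -- b = 0
    -- first term
    have hX : ((3*(c+d)+0).choose (3*c) : ZMod 9) = ((c+d).choose c : ZMod 9) := by
      have h := keyZ (c+d) c 0 0 hca (le_refl 0) (by omega)
      rw [hsub] at h
      simp [ww] at h
      simpa using h
    have hY : ((3*(c+d)+0+3*c).choose (3*c) : ZMod 9) = ((c+d+c).choose c : ZMod 9) := by
      have harg : 3*(c+d)+0+3*c = 3*(c+d+c)+0 := by ring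
      rw [harg]
      have h := keyZ (c+d+c) c 0 0 hca2 (le_refl 0) (by omega)
      rw [hsub2] at h
      simp [ww] at h
      simpa using h
    have hv1 : (((3*(c+d)+0).choose (3*c+1) : ZMod 9))^r = 0 :=
      van r _ _ h2r (by
        rw [show (3*(c+d)+0) % 3 = 0 from by omega, show (3*c+1) % 3 = 1 from by omega]; rfl)
    have hv2 : (((3*(c+d)+0).choose (3*c+2) : ZMod 9))^r = 0 :=
      van r _ _ h2r (by
        rw [show (3*(c+d)+0) % 3 = 0 from by omega, show (3*c+2) % 3 = 2 from by omega]; rfl)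
    rw [hX, hY, hv1, hv2, apery_zero]
    push_cast
    ring
  · -- b = 1
    have h1 := keyZ (c+d) c 1 0 hca (by omega) (by omega)
    rw [hsub] at h1; simp only [ww, Nat.add_zero] at h1; push_cast at h1
    have hX1 : ((3*(c+d)+1).choose (3*c) : ZMod 9) =
        ((c+d).choose c : ZMod 9) * (1+3*c) := by
      refine alg10 _ _ c d ?_
      push_cast
      linear_combination h1
    have h2 := keyZ (c+d) c 1 1 hca (by omega) (by omega)
    rw [hsub] at h2; simp only [ww, Nat.add_zero] at h2; push_cast at h2
    have hX2 : (((3*(c+d)+1).choose (3*c+1) : ZMod 9)) =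
        ((c+d).choose c : ZMod 9) * (1+3*d) := by
      refine alg11 _ _ c d ?_
      push_cast
      linear_combination h2
    have hY1 : ((3*(c+d)+1+3*c).choose (3*c) : ZMod 9) =
        ((c+d+c).choose c : ZMod 9) * (1+3*c) := by
      have harg : 3*(c+d)+1+3*c = 3*(c+d+c)+1 := by ring
      rw [harg]
      have h := keyZ (c+d+c) c 1 0 hca2 (by omega) (by omega)
      rw [hsub2] at h; simp only [ww, Nat.add_zero] at h; push_cast at h
      refine alg10 _ _ (c:ZMod 9) ((c:ZMod 9)+d) ?_
      push_cast
      linear_combination h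
    have hY2 : ((3*(c+d)+1+(3*c+1)).choose (3*c+1) : ZMod 9) =
        ((c+d+c).choose c : ZMod 9) * (2*(1-3*(2*(c:ZMod 9)+d))) := by
      have harg : 3*(c+d)+1+(3*c+1) = 3*(c+d+c)+2 := by ring
      rw [harg]
      have h := keyZ (c+d+c) c 2 1 hca2 (by omega) (by omega)
      rw [hsub2] at h; simp only [ww, Nat.add_zero] at h; push_cast at h
      refine algY11 _ _ (c:ZMod 9) (d:ZMod 9) ?_
      push_cast
      linear_combination h
    have hv3 : (((3*(c+d)+1).choose (3*c+2) : ZMod 9))^r = 0 :=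
      van r _ _ h2r (by
        rw [show (3*(c+d)+1) % 3 = 1 from by omega, show (3*c+2) % 3 = 2 from by omega]; rfl)
    rw [hX1, hX2, hY1, hY2, hv3, apery_one]
    rw [mul_pow, mul_pow, mul_pow, mul_pow]
    have hb1 := bracket1 r s hcond (c : ZMod 9) (d : ZMod 9)
    linear_combination (((c+d).choose c : ZMod 9)^r * ((c+d+c).choose c : ZMod 9)^s) * hb1
  · -- b = 2
    have h1 := keyZ (c+d) c 2 0 hca (by omega) (by omega)
    rw [hsub] at h1; simp only [ww, Nat.add_zero] at h1; push_cast at h1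
    have hX1 : ((3*(c+d)+2).choose (3*c) : ZMod 9) = ((c+d).choose c : ZMod 9) := by
      refine alg20 _ _ (c:ZMod 9) (d:ZMod 9) ?_
      push_cast
      linear_combination h1
    have hY1 : ((3*(c+d)+2+3*c).choose (3*c) : ZMod 9) = ((c+d+c).choose c : ZMod 9) := by
      have harg : 3*(c+d)+2+3*c = 3*(c+d+c)+2 := by ring
      rw [harg]
      have h := keyZ (c+d+c) c 2 0 hca2 (by omega) (by omega)
      rw [hsub2] at h; simp only [ww, Nat.add_zero] at h; push_cast at h
      refine alg20 _ _ (c:ZMod 9) ((c:ZMod 9)+d) ?_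
      push_cast
      linear_combination h
    have hv2 : (((3*(c+d)+2+(3*c+1)).choose (3*c+1) : ZMod 9))^s = 0 :=
      van s _ _ h2s (by
        rw [show (3*(c+d)+2+(3*c+1)) % 3 = 0 from by omega,
          show (3*c+1) % 3 = 1 from by omega]; rfl)
    have hv3 : (((3*(c+d)+2+(3*c+2)).choose (3*c+2) : ZMod 9))^s = 0 :=
      van s _ _ h2s (by
        rw [show (3*(c+d)+2+(3*c+2)) % 3 = 1 from by omega,
          show (3*c+2) % 3 = 2 from by omega]; rfl)
    rw [hX1, hY1, hv2, hv3, apery_two r s h2s]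
    ring

lemma apery_cast (r s n : ℕ) :
    ((apery r s n : ℕ) : ZMod 9) =
      ∑ k ∈ range (n+1), ((n.choose k : ZMod 9))^r * (((n+k).choose k : ZMod 9))^s := by
  simp [apery]

lemma step (r s : ℕ) (h2r : 2 ≤ r) (h2s : 2 ≤ s)
    (hcond : (∃ S u, s = 2*S ∧ r + 2*s = 3*u) ∨ (3 ∣ r ∧ 3 ∣ s))
    (a b : ℕ) (hb : b ≤ 2) :
    ((apery r s (3*a+b) : ℕ) : ZMod 9) = ((apery r s a : ℕ) : ZMod 9) * ((apery r s b : ℕ) : ZMod 9) := by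
  rw [apery_cast]
  have hext : ∑ k ∈ range (3*a+b+1),
        (((3*a+b).choose k : ZMod 9))^r * (((3*a+b+k).choose k : ZMod 9))^s
      = ∑ k ∈ range (3*(a+1)),
        (((3*a+b).choose k : ZMod 9))^r * (((3*a+b+k).choose k : ZMod 9))^s := by
    refine Finset.sum_subset (Finset.range_subset_range.mpr (by omega)) ?_
    intro k hk hnk
    simp only [Finset.mem_range] at hk hnk
    have hlt : 3*a+b < k := by omega
    rw [Nat.choose_eq_zero_of_lt hlt]
    rw [Nat.cast_zero, zero_pow (by omega), zero_mul]
  rw [hext, sum3]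
  have hper : ∀ c ∈ range (a+1),
      (((3*a+b).choose (3*c) : ZMod 9))^r * (((3*a+b+3*c).choose (3*c) : ZMod 9))^s
        + (((3*a+b).choose (3*c+1) : ZMod 9))^r * (((3*a+b+(3*c+1)).choose (3*c+1) : ZMod 9))^s
        + (((3*a+b).choose (3*c+2) : ZMod 9))^r * (((3*a+b+(3*c+2)).choose (3*c+2) : ZMod 9))^s
      = ((a.choose c : ZMod 9))^r * (((a+c).choose c : ZMod 9))^s * ((apery r s b : ℕ) : ZMod 9) := by
    intro c hc
    simp only [Finset.mem_range] at hc
    obtain ⟨d, hd⟩ : ∃ d, a = c + d := ⟨a - c, by omega⟩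
    subst hd
    exact cell r s h2r h2s hcond b hb c d
  rw [Finset.sum_congr rfl hper, ← Finset.sum_mul, apery_cast r s a]

end AperyAux

/-- Gessel-type mod-9 factorisation of generalised Apéry numbers. -/
theorem apery_factorisation_mod_nine (r s : ℕ) (hr : 0 < r) (hs : 0 < s)
    (hrs : (r % 3 = 2 ∧ s % 6 = 2) ∨ (r % 3 = 0 ∧ s % 3 = 0) ∨
      (r % 3 = 1 ∧ 4 ≤ r ∧ s % 6 = 4))
    (n m : ℕ) (d : ℕ → ℕ) (hd2 : ∀ i, d i ≤ 2)
    (hn : n = ∑ i ∈ Finset.range (m + 1), d i * 3 ^ i) :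
    apery r s n ≡ ∏ i ∈ Finset.range (m + 1), apery r s (d i) [MOD 9] := by
  have h2r : 2 ≤ r := by omega
  have h2s : 2 ≤ s := by omega
  have hcond : (∃ S u, s = 2*S ∧ r + 2*s = 3*u) ∨ (3 ∣ r ∧ 3 ∣ s) := by
    rcases hrs with ⟨h1, h2⟩ | ⟨h1, h2⟩ | ⟨h1, _, h2⟩
    · exact Or.inl ⟨s/2, (r+2*s)/3, by omega, by omega⟩
    · exact Or.inr ⟨by omega, by omega⟩
    · exact Or.inl ⟨s/2, (r+2*s)/3, by omega, by omega⟩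
  rw [← ZMod.natCast_eq_natCast_iff]
  push_cast
  subst hn
  induction m generalizing d with
  | zero =>
      norm_num [Finset.sum_range_one, Finset.prod_range_one]
  | succ m ih =>
      have hsum : (∑ i ∈ Finset.range (m+1+1), d i * 3^i)
          = 3 * (∑ i ∈ Finset.range (m+1), d (i+1) * 3^i) + d 0 := by
        rw [Finset.sum_range_succ', Finset.mul_sum]
        rw [Finset.sum_congr rfl (fun i _ => by ring : ∀ i ∈ Finset.range (m+1),
          d (i+1) * 3^(i+1) = 3 * (d (i+1) * 3^i))]
        ring
      rw [hsum, AperyAux.step r s h2r h2s hcond _ (d 0) (hd2 0)]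
      rw [ih (fun i => d (i+1)) (fun i => hd2 (i+1))]
      rw [Finset.prod_range_succ' (fun i => ((apery r s (d i) : ℕ) : ZMod 9)) (m+1)]
end

section
/- Let r and s be positive integers with r \equiv 0 (mod 3) and s \equiv 0 (mod 6). For a nonnegative integer n, let t be the number of digits equal to 1 in the 3-adic expansion of n. Then: a_n(r,s) \equiv 1 (mod 9) if and only if t \equiv 0 (mod 6); a_n(r,s) \equiv 2 (mod 9) if and only if t \equiv 1 (mod 6); a_n(r,s) \equiv 4 (mod 9) if and only if t \equiv 2 (mod 6); a_n(r,s) \equiv 8 (mod 9) if and only if t \equiv 3 (mod 6); a_n(r,s) \equiv 7 (mod 9) if and only if t \equiv 4 (mod 6); a_n(r,s) \equiv 5 (mod 9) if and only if t \equiv 5 (mod 6); and a_n(r,s) is never \equiv 3 or 6 (mod 9). -/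
open Finset

/-- The number of digits among `d 0, …, d m` equal to `v`. -/
def digitCount (d : ℕ → ℕ) (m v : ℕ) : ℕ :=
  ((Finset.range (m + 1)).filter fun i => d i = v).card

/-- The number of occurrences of the string `ab` in the 3-adic expansion with digits
`d 0, …, d m` (using the convention that digits above position `m` are zero): indices `ν`
with `1 ≤ ν ≤ m + 1`, `d ν = a` and `d (ν - 1) = b`. -/
def occ (d : ℕ → ℕ) (m a b : ℕ) : ℕ :=
  ((Finset.Icc 1 (m + 1)).filter fun ν => d ν = a ∧ d (ν - 1) = b).card

/-- The 3-adic expansion of `n` (digits `d 0, …, d m`) has exactly one occurrence of the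
string `ab`, and all digits not belonging to this occurrence are `0` or `2`. -/
def uniqueOcc (d : ℕ → ℕ) (m a b : ℕ) : Prop :=
  occ d m a b = 1 ∧
  ∀ ν ∈ Finset.Icc 1 (m + 1), (d ν = a ∧ d (ν - 1) = b) →
    ∀ i ≤ m, i ≠ ν → i ≠ ν - 1 → (d i = 0 ∨ d i = 2)

/-- Number of digits equal to 1 in base-3 expansion. -/
def t3 (n : ℕ) : ℕ := (Nat.digits 3 n).count 1

lemma t3_zero : t3 0 = 0 := by simp [t3]

lemma t3_rec (q j : ℕ) (hj : j < 3) :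
    t3 (3 * q + j) = t3 q + (if j = 1 then 1 else 0) := by
  rcases Nat.eq_zero_or_pos (3 * q + j) with h | h
  · have hq : q = 0 := by omega
    have hj0 : j = 0 := by omega
    simp [hq, hj0, t3_zero]
  · unfold t3
    rw [Nat.digits_def' (by norm_num : 1 < 3) h]
    have h1 : (3 * q + j) % 3 = j := by omega
    have h2 : (3 * q + j) / 3 = q := by omega
    rw [h1, h2, List.count_cons]
    by_cases h : j = 1 <;> simp [t3, h]

/-- Single-digit Lucas for divisibility. -/
lemma dvd_choose_iff (n k : ℕ) :
    3 ∣ n.choose k ↔ 3 ∣ (n % 3).choose (k % 3) ∨ 3 ∣ (n / 3).choose (k / 3) := by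
  have h : n.choose k ≡ (n % 3).choose (k % 3) * ((n / 3).choose (k / 3)) [MOD 3] :=
    @Choose.choose_modEq_choose_mod_mul_choose_div_nat n k 3 ⟨Nat.prime_three⟩
  have := Nat.prime_three.dvd_mul (m := (n % 3).choose (k % 3)) (n := (n / 3).choose (k / 3))
  unfold Nat.ModEq at h
  constructor
  · intro hd
    rw [← this]
    omega
  · intro hd
    rw [← this] at hd
    omega

lemma dvd_choose_split (q j i b : ℕ) (hj : j < 3) (hb : b < 3) :
    3 ∣ (3 * q + j).choose (3 * i + b) ↔ (3 ∣ q.choose i ∨ ¬ b ≤ j) := by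
  have h1 : (3 * q + j) % 3 = j := by omega
  have h2 : (3 * q + j) / 3 = q := by omega
  have h3 : (3 * i + b) % 3 = b := by omega
  have h4 : (3 * i + b) / 3 = i := by omega
  rw [dvd_choose_iff, h1, h2, h3, h4]
  have : 3 ∣ j.choose b ↔ ¬ b ≤ j := by
    interval_cases j <;> interval_cases b <;> decide
  tauto

lemma dvd_choose_add_split (q j i b : ℕ) (hj : j < 3) (hb : b < 3) :
    3 ∣ ((3 * q + j) + (3 * i + b)).choose (3 * i + b) ↔
      (3 ∣ (q + i).choose i ∨ 3 ≤ j + b) := by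
  rcases Nat.lt_or_ge (j + b) 3 with h | h
  · have e : (3 * q + j) + (3 * i + b) = 3 * (q + i) + (j + b) := by ring
    rw [e, dvd_choose_split (q + i) (j + b) i b h hb]
    simp [Nat.le_add_left b j, show ¬ 3 ≤ j + b by omega]
  · have e : (3 * q + j) + (3 * i + b) = 3 * (q + i + 1) + (j + b - 3) := by omega
    rw [e, dvd_choose_split (q + i + 1) (j + b - 3) i b (by omega) hb]
    simp [show ¬ b ≤ j + b - 3 by omega, h]

/-- The indicator of the surviving terms. -/
def chi (n k : ℕ) : ℕ :=
  if ¬ 3 ∣ n.choose k ∧ ¬ 3 ∣ (n + k).choose k then 1 else 0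

lemma chi_split (q j i b : ℕ) (hj : j < 3) (hb : b < 3) :
    chi (3 * q + j) (3 * i + b) = chi q i * (if b ≤ j ∧ j + b < 3 then 1 else 0) := by
  unfold chi
  rw [if_congr (and_congr (not_congr (dvd_choose_split q j i b hj hb))
    (not_congr (dvd_choose_add_split q j i b hj hb))) rfl rfl]
  simp only [show (3 ≤ j + b) = ¬ (j + b < 3) from propext (by omega)]
  by_cases h1 : 3 ∣ q.choose i <;> by_cases h2 : 3 ∣ (q + i).choose i <;>
    by_cases h3 : b ≤ j <;> by_cases h4 : j + b < 3 <;>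
    simp [h1, h2, h3, h4]

lemma sum_range_three_mul (F : ℕ → ℕ) (q : ℕ) :
    ∑ k ∈ range (3 * q), F k = ∑ i ∈ range q, (F (3 * i) + F (3 * i + 1) + F (3 * i + 2)) := by
  induction q with
  | zero => simp
  | succ q ih =>
    have e : 3 * (q + 1) = 3 * q + 1 + 1 + 1 := by ring
    rw [e, Finset.sum_range_succ, Finset.sum_range_succ, Finset.sum_range_succ,
      Finset.sum_range_succ, ih]
    ring

lemma G_rec (q j : ℕ) (hj : j < 3) :
    ∑ k ∈ range (3 * q + j + 1), chi (3 * q + j) k =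
      (if j = 1 then 2 else 1) * ∑ i ∈ range (q + 1), chi q i := by
  have hext : ∑ k ∈ range (3 * q + j + 1), chi (3 * q + j) k
      = ∑ k ∈ range (3 * (q + 1)), chi (3 * q + j) k := by
    refine Finset.sum_subset (Finset.range_subset_range.2 (by omega)) ?_
    intro k hk hk'
    rw [Finset.mem_range] at hk
    rw [Finset.mem_range, not_lt] at hk'
    obtain ⟨b, hb, hbj, rfl⟩ : ∃ b, b < 3 ∧ ¬ b ≤ j ∧ k = 3 * q + b :=
      ⟨k - 3 * q, by omega, by omega, by omega⟩
    rw [chi_split q j q b hj hb, if_neg (by tauto), mul_zero]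
  rw [hext, sum_range_three_mul, Finset.mul_sum]
  refine Finset.sum_congr rfl fun i _ => ?_
  have h0 := chi_split q j i 0 hj (by norm_num)
  have h1 := chi_split q j i 1 hj (by norm_num)
  have h2 := chi_split q j i 2 hj (by norm_num)
  rw [show 3 * i = 3 * i + 0 from rfl, h0, h1, h2]
  interval_cases j <;> simp <;> ring

lemma chi_zero : chi 0 0 = 1 := by decide

lemma G_eq : ∀ n : ℕ, ∑ k ∈ range (n + 1), chi n k = 2 ^ t3 n := by
  intro n
  induction n using Nat.strong_induction_on with
  | _ n ih =>
    rcases Nat.eq_zero_or_pos n with rfl | hn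
    · simp [chi_zero, t3_zero]
    · obtain ⟨q, j, hj, rfl⟩ : ∃ q j, j < 3 ∧ n = 3 * q + j :=
        ⟨n / 3, n % 3, by omega, by omega⟩
      have hq : q < 3 * q + j := by omega
      rw [G_rec q j hj, ih q hq, t3_rec q j hj]
      by_cases h : j = 1 <;> simp [h, pow_succ] <;> ring

/-- If both binomials are prime to 3, the first one is ≡ 1 mod 3. -/
lemma choose_mod_three : ∀ n k : ℕ, ¬ 3 ∣ n.choose k → ¬ 3 ∣ (n + k).choose k →
    n.choose k % 3 = 1 := by
  intro n
  induction n using Nat.strong_induction_on with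
  | _ n ih =>
    intro k h1 h2
    rcases Nat.eq_zero_or_pos n with rfl | hn
    · rcases Nat.eq_zero_or_pos k with rfl | hk
      · simp
      · exfalso; apply h1; simp [Nat.choose_eq_zero_of_lt hk]
    · obtain ⟨q, j, hj, rfl⟩ : ∃ q j, j < 3 ∧ n = 3 * q + j :=
        ⟨n / 3, n % 3, by omega, by omega⟩
      obtain ⟨i, b, hb, rfl⟩ : ∃ i b, b < 3 ∧ k = 3 * i + b :=
        ⟨k / 3, k % 3, by omega, by omega⟩
      rw [dvd_choose_split q j i b hj hb] at h1
      push_neg at h1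
      obtain ⟨h1q, h1b⟩ := h1
      rw [dvd_choose_add_split q j i b hj hb] at h2
      push_neg at h2
      obtain ⟨h2q, h2b⟩ := h2
      have hl : (3 * q + j).choose (3 * i + b) ≡ j.choose b * q.choose i [MOD 3] := by
        have h := @Choose.choose_modEq_choose_mod_mul_choose_div_nat (3 * q + j) (3 * i + b) 3
          ⟨Nat.prime_three⟩
        rwa [show (3 * q + j) % 3 = j by omega, show (3 * q + j) / 3 = q by omega,
          show (3 * i + b) % 3 = b by omega, show (3 * i + b) / 3 = i by omega] at h
      have hjb : j.choose b = 1 := by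
        interval_cases j <;> interval_cases b <;> simp_all <;> omega
      have hqi : q.choose i % 3 = 1 := ih q (by omega) i h1q h2q
      unfold Nat.ModEq at hl
      rw [hjb, one_mul] at hl
      omega

lemma zmod9_cube : ∀ y : ZMod 9, y.val % 3 = 1 → y ^ 3 = 1 := by decide
lemma zmod9_six : ∀ y : ZMod 9, y.val % 3 ≠ 0 → y ^ 6 = 1 := by decide

lemma term_eq (r s : ℕ) (hr : 0 < r) (hs : 0 < s) (hr3 : r % 3 = 0) (hs6 : s % 6 = 0)
    (n k : ℕ) :
    ((n.choose k ^ r * (n + k).choose k ^ s : ℕ) : ZMod 9) = (chi n k : ZMod 9) := by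
  by_cases h1 : 3 ∣ n.choose k
  · have h9 : (9 : ℕ) ∣ n.choose k ^ r := by
      calc (9 : ℕ) = 3 ^ 2 := by norm_num
      _ ∣ 3 ^ r := pow_dvd_pow 3 (by omega)
      _ ∣ n.choose k ^ r := pow_dvd_pow_of_dvd h1 r
    have : (9 : ℕ) ∣ n.choose k ^ r * (n + k).choose k ^ s := h9.mul_right _
    rw [(ZMod.natCast_eq_zero_iff _ 9).2 this]
    simp [chi, h1]
  · by_cases h2 : 3 ∣ (n + k).choose k
    · have h9 : (9 : ℕ) ∣ (n + k).choose k ^ s := by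
        calc (9 : ℕ) = 3 ^ 2 := by norm_num
        _ ∣ 3 ^ s := pow_dvd_pow 3 (by omega)
        _ ∣ (n + k).choose k ^ s := pow_dvd_pow_of_dvd h2 s
      have : (9 : ℕ) ∣ n.choose k ^ r * (n + k).choose k ^ s := h9.mul_left _
      rw [(ZMod.natCast_eq_zero_iff _ 9).2 this]
      simp [chi, h2]
    · have hm : n.choose k % 3 = 1 := choose_mod_three n k h1 h2
      have hx : ((n.choose k : ZMod 9)) ^ r = 1 := by
        have hv : (n.choose k : ZMod 9).val % 3 = 1 := by
          rw [ZMod.val_natCast]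
          omega
        rw [show r = 3 * (r / 3) by omega, pow_mul, zmod9_cube _ hv, one_pow]
      have hy : (((n + k).choose k : ZMod 9)) ^ s = 1 := by
        have hv : ((n + k).choose k : ZMod 9).val % 3 ≠ 0 := by
          rw [ZMod.val_natCast]
          omega
        rw [show s = 6 * (s / 6) by omega, pow_mul, zmod9_six _ hv, one_pow]
      push_cast
      rw [hx, hy, one_mul]
      simp [chi, h1, h2]

lemma digitCount_eq_t3 : ∀ (m : ℕ) (d : ℕ → ℕ) (n : ℕ), (∀ i, d i ≤ 2) →
    n = ∑ i ∈ range (m + 1), d i * 3 ^ i →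
    ((Finset.range (m + 1)).filter fun i => d i = 1).card = t3 n := by
  intro m
  induction m with
  | zero =>
    intro d n hd2 hn
    have hn' : n = d 0 := by simpa using hn
    have h0 : d 0 = 0 ∨ d 0 = 1 ∨ d 0 = 2 := by have := hd2 0; omega
    have e1 : t3 1 = 1 := by
      have := t3_rec 0 1 (by norm_num); simpa [t3_zero] using this
    have e2 : t3 2 = 0 := by
      have := t3_rec 0 2 (by norm_num); simpa [t3_zero] using this
    rcases h0 with h | h | h <;>
      simp [hn', h, Finset.filter_singleton, Finset.range_one, t3_zero, e1, e2]
  | succ m ih =>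
    intro d n hd2 hn
    set n' := ∑ i ∈ range (m + 1), d (i + 1) * 3 ^ i with hn'
    have hsplit : n = 3 * n' + d 0 := by
      rw [hn, Finset.sum_range_succ']
      have : ∀ i, d (i + 1) * 3 ^ (i + 1) = 3 * (d (i + 1) * 3 ^ i) := fun i => by ring
      simp only [this, ← Finset.mul_sum, pow_zero, mul_one]
      rfl
    have hIH : ((Finset.range (m + 1)).filter fun i => d (i + 1) = 1).card = t3 n' :=
      ih (fun i => d (i + 1)) n' (fun i => hd2 (i + 1)) rfl
    have hcard : ((Finset.range (m + 1 + 1)).filter fun i => d i = 1).card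
        = ((Finset.range (m + 1)).filter fun i => d (i + 1) = 1).card
          + (if d 0 = 1 then 1 else 0) := by
      rw [Finset.card_filter, Finset.card_filter, Finset.sum_range_succ']
    rw [hcard, hIH, hsplit, t3_rec n' (d 0) (by have := hd2 0; omega)]


lemma apery_mod' (r s : ℕ) (hr : 0 < r) (hs : 0 < s) (hr3 : r % 3 = 0) (hs6 : s % 6 = 0)
    (n : ℕ) : apery r s n % 9 = 2 ^ (t3 n) % 9 := by
  have hz : ((apery r s n : ℕ) : ZMod 9) = ((2 ^ t3 n : ℕ) : ZMod 9) := by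
    unfold apery
    rw [Nat.cast_sum]
    rw [Finset.sum_congr rfl fun k _ => term_eq r s hr hs hr3 hs6 n k]
    rw [← Nat.cast_sum, G_eq n]
  exact (ZMod.natCast_eq_natCast_iff' _ _ _).1 hz

lemma pow_two_mod_nine (t : ℕ) : 2 ^ t % 9 = 2 ^ (t % 6) % 9 := by
  conv_lhs => rw [show t = 6 * (t / 6) + t % 6 by omega]
  rw [pow_add, pow_mul]
  have h : (2 ^ 6) ^ (t / 6) * 2 ^ (t % 6) ≡ 1 ^ (t / 6) * 2 ^ (t % 6) [MOD 9] :=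
    Nat.ModEq.mul_right _ (Nat.ModEq.pow _ (by decide))
  simp at h
  exact h

/-- Apéry numbers mod 9 for `r ≡ 0 (mod 3)`, `s ≡ 0 (mod 6)`. -/
theorem apery_mod_nine_r0_s0 (r s : ℕ) (hr : 0 < r) (hs : 0 < s) (hr3 : r % 3 = 0) (hs6 : s % 6 = 0)
    (n m : ℕ) (d : ℕ → ℕ) (hd2 : ∀ i, d i ≤ 2) (hd0 : ∀ i, m < i → d i = 0)
    (hn : n = ∑ i ∈ Finset.range (m + 1), d i * 3 ^ i) :
    (apery r s n ≡ 1 [MOD 9] ↔ digitCount d m 1 % 6 = 0) ∧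
    (apery r s n ≡ 2 [MOD 9] ↔ digitCount d m 1 % 6 = 1) ∧
    (apery r s n ≡ 4 [MOD 9] ↔ digitCount d m 1 % 6 = 2) ∧
    (apery r s n ≡ 8 [MOD 9] ↔ digitCount d m 1 % 6 = 3) ∧
    (apery r s n ≡ 7 [MOD 9] ↔ digitCount d m 1 % 6 = 4) ∧
    (apery r s n ≡ 5 [MOD 9] ↔ digitCount d m 1 % 6 = 5) ∧
    ¬ (apery r s n ≡ 3 [MOD 9]) ∧
    ¬ (apery r s n ≡ 6 [MOD 9]) := by
  have h2 : digitCount d m 1 = t3 n := digitCount_eq_t3 m d n hd2 hn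
  have hmain : apery r s n % 9 = 2 ^ (t3 n % 6) % 9 := by
    rw [apery_mod' r s hr hs hr3 hs6 n, pow_two_mod_nine]
  rw [h2]
  set u := t3 n % 6 with hu
  have hu6 : u < 6 := Nat.mod_lt _ (by norm_num)
  simp only [Nat.ModEq, hmain]
  interval_cases u <;> norm_num
end

section
/- Let r and s be positive integers with r \equiv 0 (mod 3) and s \equiv 3 (mod 6). Then for every nonnegative integer n: a_n(r,s) \equiv 1 (mod 9) if and only if every digit of the 3-adic expansion of n is 0 or 2, and in all other cases 9 divides a_n(r,s); in particular a_n(r,s) is never \equiv 2, 3, 4, 5, 6, 7, or 8 (mod 9). -/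
open Finset

/- ---------------- auxiliary lemmas ---------------- -/

private lemma lucas3 (n k : ℕ) :
    n.choose k ≡ (n % 3).choose (k % 3) * (n / 3).choose (k / 3) [MOD 3] :=
  haveI : Fact (Nat.Prime 3) := ⟨by norm_num⟩
  Choose.choose_modEq_choose_mod_mul_choose_div_nat

/-- If `3 ∣ e` then `a ^ e mod 9` only depends on `a mod 3`. -/
private lemma pow39 {a b e : ℕ} (he : 3 ∣ e) (h : a ≡ b [MOD 3]) :
    a ^ e ≡ b ^ e [MOD 9] := by
  obtain ⟨t, rfl⟩ := he
  have h' : (a : ℤ) ≡ (b : ℤ) [ZMOD 3] := by exact_mod_cast (Int.natCast_modEq_iff).2 h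
  obtain ⟨u, hu⟩ := Int.ModEq.dvd h'
  have hc : ((b : ℤ)) ^ 3 - (a : ℤ) ^ 3 = 9 * ((a:ℤ)^2*u + 3*(a:ℤ)*u^2 + 3*u^3) := by
    have hb : (b : ℤ) = a + 3 * u := by
      have : (3:ℤ) ∣ (3:ℕ) := by norm_num
      linarith [hu]
    rw [hb]; ring
  have h9 : (a : ℤ) ^ 3 ≡ (b : ℤ) ^ 3 [ZMOD 9] := Int.modEq_iff_dvd.2 ⟨_, hc⟩
  have h9' := h9.pow t
  rw [← pow_mul, ← pow_mul] at h9'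
  have h9'' : ((a ^ (3*t) : ℕ) : ℤ) ≡ ((b ^ (3*t) : ℕ) : ℤ) [ZMOD ((9:ℕ):ℤ)] := by
    push_cast
    exact h9'
  exact (Int.natCast_modEq_iff).1 h9''

private lemma two_pow_s {s : ℕ} (hs6 : s % 6 = 3) : 2 ^ s ≡ 8 [MOD 9] := by
  obtain ⟨u, rfl⟩ : ∃ u, s = 6 * u + 3 := ⟨s / 6, by omega⟩
  have : (2:ℕ) ^ (6*u+3) = (2^6)^u * 2^3 := by rw [pow_add, pow_mul]
  rw [this]
  calc (2^6:ℕ)^u * 2^3 ≡ 1^u * 2^3 [MOD 9] :=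
        Nat.ModEq.mul (Nat.ModEq.pow u (by decide)) Nat.ModEq.rfl
    _ = 8 := by norm_num

private lemma pow_zero9 {c e : ℕ} (h3 : 3 ∣ c) (he : 3 ≤ e) : c ^ e ≡ 0 [MOD 9] := by
  have : (9:ℕ) ∣ c ^ e := by
    obtain ⟨v, rfl⟩ := h3
    have h9 : (9:ℕ) ∣ 3 ^ e := by
      have : (3:ℕ)^2 ∣ 3 ^ e := pow_dvd_pow 3 (by omega)
      simpa using this
    calc (9:ℕ) ∣ 3 ^ e := h9
      _ ∣ (3*v)^e := by rw [mul_pow]; exact dvd_mul_right _ _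
  simpa [Nat.modEq_zero_iff_dvd] using this

/-- The digit factor. -/
private def mu (d e : ℕ) : ℕ := if d = 1 ∧ e = 1 then 8 else if e = 0 then 1 else 0

private lemma term_step (r s : ℕ) (hr : 0 < r) (hr3 : r % 3 = 0) (hs6 : s % 6 = 3)
    (q j d e : ℕ) (hd : d < 3) (he : e < 3) :
    (3*q+d).choose (3*j+e) ^ r * ((3*q+d) + (3*j+e)).choose (3*j+e) ^ s
      ≡ mu d e * (q.choose j ^ r * (q+j).choose j ^ s) [MOD 9] := by
  have h3r : 3 ∣ r := by omega
  have h3s : 3 ∣ s := by omega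
  have hr3' : 3 ≤ r := by omega
  have hs3' : 3 ≤ s := by omega
  have hc1 : (3*q+d).choose (3*j+e) ≡ d.choose e * q.choose j [MOD 3] := by
    have h := lucas3 (3*q+d) (3*j+e)
    rw [(by omega : (3*q+d) % 3 = d), (by omega : (3*q+d)/3 = q),
        (by omega : (3*j+e) % 3 = e), (by omega : (3*j+e)/3 = j)] at h
    exact h
  have hc2 : ((3*q+d)+(3*j+e)).choose (3*j+e)
      ≡ ((d+e) % 3).choose e * ((q+j) + (d+e)/3).choose j [MOD 3] := by
    have h := lucas3 ((3*q+d)+(3*j+e)) (3*j+e)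
    rw [(by omega : ((3*q+d)+(3*j+e)) % 3 = (d+e) % 3),
        (by omega : ((3*q+d)+(3*j+e))/3 = (q+j) + (d+e)/3),
        (by omega : (3*j+e) % 3 = e), (by omega : (3*j+e)/3 = j)] at h
    exact h
  interval_cases d <;> interval_cases e <;>
    simp only [mu, if_true, if_false] <;> norm_num at hc1 hc2 ⊢
  -- (0,0)
  · exact Nat.ModEq.mul (pow39 h3r hc1) (pow39 h3s hc2)
  -- (0,1): c1 ≡ 0
  · have h0 : (3:ℕ) ∣ (3*q+0).choose (3*j+1) := (Nat.modEq_zero_iff_dvd).1 hc1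
    calc (3*q+0).choose (3*j+1) ^ r * ((3*q+0)+(3*j+1)).choose (3*j+1) ^ s
        ≡ 0 * ((3*q+0)+(3*j+1)).choose (3*j+1) ^ s [MOD 9] :=
          Nat.ModEq.mul (pow_zero9 h0 hr3') Nat.ModEq.rfl
      _ = 0 := by ring
  -- (0,2): c1 ≡ 0
  · have h0 : (3:ℕ) ∣ (3*q+0).choose (3*j+2) := (Nat.modEq_zero_iff_dvd).1 hc1
    calc (3*q+0).choose (3*j+2) ^ r * ((3*q+0)+(3*j+2)).choose (3*j+2) ^ s
        ≡ 0 * ((3*q+0)+(3*j+2)).choose (3*j+2) ^ s [MOD 9] :=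
          Nat.ModEq.mul (pow_zero9 h0 hr3') Nat.ModEq.rfl
      _ = 0 := by ring
  -- (1,0)
  · exact Nat.ModEq.mul (pow39 h3r hc1) (pow39 h3s hc2)
  -- (1,1): sign -1
  · have p1 := pow39 h3r hc1
    have p2 := pow39 h3s hc2
    have p2' : ((3*q+1)+(3*j+1)).choose (3*j+1) ^ s ≡ 8 * ((q+j).choose j)^s [MOD 9] := by
      calc ((3*q+1)+(3*j+1)).choose (3*j+1) ^ s
          ≡ (2 * (q+j).choose j) ^ s [MOD 9] := p2
        _ = 2^s * ((q+j).choose j)^s := by rw [mul_pow]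
        _ ≡ 8 * ((q+j).choose j)^s [MOD 9] := Nat.ModEq.mul (two_pow_s hs6) Nat.ModEq.rfl
    calc (3*q+1).choose (3*j+1) ^ r * ((3*q+1)+(3*j+1)).choose (3*j+1) ^ s
        ≡ q.choose j ^ r * (8 * ((q+j).choose j)^s) [MOD 9] := Nat.ModEq.mul p1 p2'
      _ = 8 * (q.choose j ^ r * ((q+j).choose j)^s) := by ring
  -- (1,2): c1 ≡ 0
  · have h0 : (3:ℕ) ∣ (3*q+1).choose (3*j+2) := (Nat.modEq_zero_iff_dvd).1 hc1
    calc (3*q+1).choose (3*j+2) ^ r * ((3*q+1)+(3*j+2)).choose (3*j+2) ^ s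
        ≡ 0 * ((3*q+1)+(3*j+2)).choose (3*j+2) ^ s [MOD 9] :=
          Nat.ModEq.mul (pow_zero9 h0 hr3') Nat.ModEq.rfl
      _ = 0 := by ring
  -- (2,0)
  · exact Nat.ModEq.mul (pow39 h3r hc1) (pow39 h3s hc2)
  -- (2,1): carry, c2 ≡ 0
  · have h0 : (3:ℕ) ∣ ((3*q+2)+(3*j+1)).choose (3*j+1) := (Nat.modEq_zero_iff_dvd).1 hc2
    calc (3*q+2).choose (3*j+1) ^ r * ((3*q+2)+(3*j+1)).choose (3*j+1) ^ s
        ≡ (3*q+2).choose (3*j+1) ^ r * 0 [MOD 9] :=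
          Nat.ModEq.mul Nat.ModEq.rfl (pow_zero9 h0 hs3')
      _ = 0 := by ring
  -- (2,2): carry, c2 ≡ 0
  · have h0 : (3:ℕ) ∣ ((3*q+2)+(3*j+2)).choose (3*j+2) := (Nat.modEq_zero_iff_dvd).1 hc2
    calc (3*q+2).choose (3*j+2) ^ r * ((3*q+2)+(3*j+2)).choose (3*j+2) ^ s
        ≡ (3*q+2).choose (3*j+2) ^ r * 0 [MOD 9] :=
          Nat.ModEq.mul Nat.ModEq.rfl (pow_zero9 h0 hs3')
      _ = 0 := by ring

private lemma sum_range_three_mul_s7 {β : Type*} [AddCommMonoid β] (f : ℕ → β) (M : ℕ) :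
    ∑ k ∈ Finset.range (3*M), f k
      = ∑ j ∈ Finset.range M, (f (3*j) + f (3*j+1) + f (3*j+2)) := by
  induction M with
  | zero => simp
  | succ M ih =>
    rw [show 3*(M+1) = (3*M+2)+1 from by ring, Finset.sum_range_succ,
        show 3*M+2 = (3*M+1)+1 from rfl, Finset.sum_range_succ,
        Finset.sum_range_succ, ih, Finset.sum_range_succ]
    abel

private lemma apery_step (r s : ℕ) (hr : 0 < r) (hr3 : r % 3 = 0) (hs6 : s % 6 = 3)
    (q d : ℕ) (hd : d < 3) :
    (apery r s (3*q+d) : ZMod 9) = (if d = 1 then 0 else 1) * (apery r s q : ZMod 9) := by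
  have hext : apery r s (3*q+d)
      = ∑ k ∈ Finset.range (3*(q+1)), (3*q+d).choose k ^ r * ((3*q+d)+k).choose k ^ s := by
    rw [apery]
    apply Finset.sum_subset (Finset.range_subset_range.2 (by omega))
    intro k hk hk'
    simp only [Finset.mem_range] at hk hk'
    rw [Nat.choose_eq_zero_of_lt (by omega), Nat.zero_pow (by omega), zero_mul]
  have hterm : ∀ j e, e < 3 →
      (((3*q+d).choose (3*j+e) ^ r * ((3*q+d)+(3*j+e)).choose (3*j+e) ^ s : ℕ) : ZMod 9)
        = (mu d e : ZMod 9) * ((q.choose j ^ r * (q+j).choose j ^ s : ℕ) : ZMod 9) := by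
    intro j e he
    have h := (ZMod.natCast_eq_natCast_iff _ _ 9).2 (term_step r s hr hr3 hs6 q j d e hd he)
    rw [h]; push_cast; ring
  rw [hext, Nat.cast_sum, sum_range_three_mul_s7 (fun k =>
      (((3*q+d).choose k ^ r * ((3*q+d)+k).choose k ^ s : ℕ) : ZMod 9)) (q+1)]
  have hcongr : ∀ j ∈ Finset.range (q+1),
      ((((3*q+d).choose (3*j) ^ r * ((3*q+d)+(3*j)).choose (3*j) ^ s : ℕ) : ZMod 9)
        + (((3*q+d).choose (3*j+1) ^ r * ((3*q+d)+(3*j+1)).choose (3*j+1) ^ s : ℕ) : ZMod 9)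
        + (((3*q+d).choose (3*j+2) ^ r * ((3*q+d)+(3*j+2)).choose (3*j+2) ^ s : ℕ) : ZMod 9))
      = ((mu d 0 + mu d 1 + mu d 2 : ℕ) : ZMod 9)
          * ((q.choose j ^ r * (q+j).choose j ^ s : ℕ) : ZMod 9) := by
    intro j _
    have h0 := hterm j 0 (by norm_num)
    have h1 := hterm j 1 (by norm_num)
    have h2 := hterm j 2 (by norm_num)
    simp only [Nat.add_zero] at h0
    rw [h0, h1, h2]; push_cast; ring
  rw [Finset.sum_congr rfl hcongr, ← Finset.mul_sum]
  have happ : (apery r s q : ZMod 9)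
      = ∑ j ∈ Finset.range (q+1), ((q.choose j ^ r * (q+j).choose j ^ s : ℕ) : ZMod 9) := by
    rw [apery, Nat.cast_sum]
  rw [← happ]
  congr 1
  interval_cases d <;> simp [mu] <;> decide

/-- `n` has no digit equal to 1 in base 3. -/
private def noOne (n : ℕ) : Prop := ∀ i, n / 3 ^ i % 3 ≠ 1

private lemma noOne_iff (n : ℕ) : noOne n ↔ (n % 3 ≠ 1 ∧ noOne (n / 3)) := by
  constructor
  · intro h
    refine ⟨by simpa using h 0, fun i => ?_⟩
    have h' := h (i+1)
    rwa [pow_succ', ← Nat.div_div_eq_div_mul] at h'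
  · rintro ⟨h0, h⟩ i
    cases i with
    | zero => simpa using h0
    | succ i =>
      have h' := h i
      rwa [pow_succ', ← Nat.div_div_eq_div_mul]

private lemma apery_zmod (r s : ℕ) (hr : 0 < r) (hr3 : r % 3 = 0) (hs6 : s % 6 = 3) :
    ∀ n, (noOne n → (apery r s n : ZMod 9) = 1) ∧ (¬ noOne n → (apery r s n : ZMod 9) = 0) := by
  intro n
  induction n using Nat.strong_induction_on with
  | _ n ih =>
    rcases Nat.eq_zero_or_pos n with rfl | hn
    · constructor
      · intro _; norm_num [apery]
      · intro h
        exact absurd (fun i => by simp [Nat.zero_div]) h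
    · have hq : n / 3 < n := Nat.div_lt_self hn (by norm_num)
      have hstep := apery_step r s hr hr3 hs6 (n/3) (n%3) (by omega)
      rw [show 3*(n/3) + n%3 = n from by omega] at hstep
      have ihq := ih (n/3) hq
      by_cases h1 : n % 3 = 1
      · have hno : ¬ noOne n := fun h => (((noOne_iff n).1 h).1) h1
        exact ⟨fun h => absurd h hno, fun _ => by rw [hstep, if_pos h1, zero_mul]⟩
      · rw [hstep, if_neg h1, one_mul]
        constructor
        · intro h; exact ihq.1 ((noOne_iff n).1 h).2
        · intro h
          apply ihq.2
          intro hq'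
          exact h ((noOne_iff n).2 ⟨h1, hq'⟩)

private lemma digits_div (m : ℕ) : ∀ (d : ℕ → ℕ), (∀ i, d i ≤ 2) → (∀ i, m < i → d i = 0) →
    ∀ i, (∑ i ∈ Finset.range (m+1), d i * 3 ^ i) / 3 ^ i % 3 = d i := by
  induction m with
  | zero =>
    intro d hd2 hd0 i
    simp only [Nat.zero_add, zero_add, Finset.sum_range_one, pow_zero, mul_one]
    cases i with
    | zero =>
      have h0 := hd2 0
      simp only [pow_zero, Nat.div_one]
      omega
    | succ i =>
      have h3le : (3:ℕ) ≤ 3 ^ (i+1) := Nat.le_self_pow (by omega) 3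
      have hlt : d 0 < 3 ^ (i+1) := lt_of_le_of_lt (hd2 0) (by omega)
      rw [Nat.div_eq_of_lt hlt, hd0 (i+1) (by omega)]
  | succ m ih =>
    intro d hd2 hd0 i
    have hsplit : (∑ i ∈ Finset.range (m+2), d i * 3 ^ i)
        = d 0 + 3 * (∑ i ∈ Finset.range (m+1), d (i+1) * 3 ^ i) := by
      rw [Finset.sum_range_succ',
        Finset.sum_congr rfl (fun i _ => (by ring : d (i+1) * 3 ^ (i+1) = 3 * (d (i+1) * 3 ^ i))),
        ← Finset.mul_sum, pow_zero, mul_one, add_comm]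
    rw [hsplit]
    have hd00 : d 0 ≤ 2 := hd2 0
    cases i with
    | zero =>
      simp only [pow_zero, Nat.div_one]
      omega
    | succ i =>
      have hdiv : (d 0 + 3 * (∑ i ∈ Finset.range (m+1), d (i+1) * 3 ^ i)) / 3 ^ (i+1)
          = (∑ i ∈ Finset.range (m+1), d (i+1) * 3 ^ i) / 3 ^ i := by
        rw [pow_succ', ← Nat.div_div_eq_div_mul,
          (by omega : (d 0 + 3 * (∑ i ∈ Finset.range (m+1), d (i+1) * 3 ^ i)) / 3
            = ∑ i ∈ Finset.range (m+1), d (i+1) * 3 ^ i)]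
      rw [hdiv]
      exact ih (fun i => d (i+1)) (fun i => hd2 (i+1)) (fun i hi => hd0 (i+1) (by omega)) i

private lemma not_modEq_of_01 (a c : ℕ) (h : (a : ZMod 9) = 0 ∨ (a : ZMod 9) = 1)
    (hc0 : ((c : ℕ) : ZMod 9) ≠ 0) (hc1 : ((c : ℕ) : ZMod 9) ≠ 1) : ¬ a ≡ c [MOD 9] := by
  intro hc
  have h' := (ZMod.natCast_eq_natCast_iff a c 9).2 hc
  rcases h with h | h
  · exact hc0 (h'.symm.trans h)
  · exact hc1 (h'.symm.trans h)

/-- Apéry numbers mod 9 for `r ≡ 0 (mod 3)`, `s ≡ 3 (mod 6)`. -/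
theorem apery_mod_nine_r0_s3 (r s : ℕ) (hr : 0 < r) (hs : 0 < s)
    (hr3 : r % 3 = 0) (hs6 : s % 6 = 3)
    (n m : ℕ) (d : ℕ → ℕ) (hd2 : ∀ i, d i ≤ 2) (hd0 : ∀ i, m < i → d i = 0)
    (hn : n = ∑ i ∈ Finset.range (m + 1), d i * 3 ^ i) :
    (apery r s n ≡ 1 [MOD 9] ↔ (∀ i ≤ m, d i = 0 ∨ d i = 2)) ∧
    (¬ (∀ i ≤ m, d i = 0 ∨ d i = 2) → 9 ∣ apery r s n) ∧
    ¬ (apery r s n ≡ 2 [MOD 9]) ∧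
    ¬ (apery r s n ≡ 3 [MOD 9]) ∧
    ¬ (apery r s n ≡ 4 [MOD 9]) ∧
    ¬ (apery r s n ≡ 5 [MOD 9]) ∧
    ¬ (apery r s n ≡ 6 [MOD 9]) ∧
    ¬ (apery r s n ≡ 7 [MOD 9]) ∧
    ¬ (apery r s n ≡ 8 [MOD 9]) := by
  have hdig : ∀ i, n / 3 ^ i % 3 = d i := by
    intro i
    rw [hn]
    exact digits_div m d hd2 hd0 i
  have hiff : noOne n ↔ (∀ i ≤ m, d i = 0 ∨ d i = 2) := by
    constructor
    · intro h i him
      have h' := h i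
      rw [hdig i] at h'
      have := hd2 i
      omega
    · intro h i
      rw [hdig i]
      by_cases him : i ≤ m
      · rcases h i him with h' | h' <;> omega
      · rw [hd0 i (by omega)]; omega
  have hz := apery_zmod r s hr hr3 hs6 n
  have hval : (apery r s n : ZMod 9) = 0 ∨ (apery r s n : ZMod 9) = 1 := by
    by_cases hno : noOne n
    · exact Or.inr (hz.1 hno)
    · exact Or.inl (hz.2 hno)
  have hmod1 : apery r s n ≡ 1 [MOD 9] ↔ (apery r s n : ZMod 9) = 1 := by
    rw [← ZMod.natCast_eq_natCast_iff]
    norm_num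
  refine ⟨?_, ?_, ?_, ?_, ?_, ?_, ?_, ?_, ?_⟩
  · rw [hmod1]
    constructor
    · intro h
      apply hiff.1
      by_contra hno
      rw [hz.2 hno] at h
      exact absurd h (by decide)
    · intro h
      exact hz.1 (hiff.2 h)
  · intro h
    have hno : ¬ noOne n := fun h' => h (hiff.1 h')
    exact (ZMod.natCast_eq_zero_iff _ 9).1 (hz.2 hno)
  · exact not_modEq_of_01 _ 2 hval (by norm_num; decide) (by norm_num; decide)
  · exact not_modEq_of_01 _ 3 hval (by norm_num; decide) (by norm_num; decide)
  · exact not_modEq_of_01 _ 4 hval (by norm_num; decide) (by norm_num; decide)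
  · exact not_modEq_of_01 _ 5 hval (by norm_num; decide) (by norm_num; decide)
  · exact not_modEq_of_01 _ 6 hval (by norm_num; decide) (by norm_num; decide)
  · exact not_modEq_of_01 _ 7 hval (by norm_num; decide) (by norm_num; decide)
  · exact not_modEq_of_01 _ 8 hval (by norm_num; decide) (by norm_num; decide)
end

section
/- Let r and s be positive integers with r \equiv 2 (mod 3) and s \equiv 0 (mod 6). For a nonnegative integer n, let t be the number of digits equal to 1 in the 3-adic expansion of n, let o_1 be the number of occurrences of the string 11 and o_2 the number of occurrences of the string 21. Then: a_n(r,s) \equiv 1 (mod 9) iff t = 2d is even and d + o_1 - o_2 \equiv 0 (mod 3); a_n(r,s) \equiv 4 (mod 9) iff t = 2d is even and d + o_1 - o_2 \equiv 1 (mod 3); a_n(r,s) \equiv 7 (mod 9) iff t = 2d is even and d + o_1 - o_2 \equiv 2 (mod 3); a_n(r,s) \equiv 2 (mod 9) iff t = 2d+1 is odd and d + o_1 - o_2 \equiv 0 (mod 3); a_n(r,s) \equiv 8 (mod 9) iff t = 2d+1 is odd and d + o_1 - o_2 \equiv 1 (mod 3); a_n(r,s) \equiv 5 (mod 9) iff t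 = 2d+1 is odd and d + o_1 - o_2 \equiv 2 (mod 3); and a_n(r,s) is never \equiv 3 or 6 (mod 9). -/
open Finset

section AperyProof

open Nat

namespace AperyAux

/-- `W A = ∏_{i<A} (3i+1)(3i+2)`, the unit part of `(3A)!`. -/
def W (A : ℕ) : ℕ := ∏ i ∈ Finset.range A, ((3*i+1)*(3*i+2))

/-- `P ε A = ∏_{j<ε} (3A+j+1)`. -/
def P (ε A : ℕ) : ℕ := ∏ j ∈ Finset.range ε, (3*A+j+1)

lemma fact3 (A : ℕ) : (3*A)! = 3^A * A ! * W A := by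
  induction A with
  | zero => simp [W]
  | succ A ih =>
    have h3 : 3*(A+1) = (3*A+1)+1+1 := by ring
    rw [h3, Nat.factorial_succ, Nat.factorial_succ, Nat.factorial_succ, W,
      Finset.prod_range_succ, ← W, ih, Nat.factorial_succ]
    ring

lemma fact3e (A ε : ℕ) : (3*A+ε)! = 3^A * A ! * W A * P ε A := by
  induction ε with
  | zero => simpa [P] using fact3 A
  | succ ε ih =>
    rw [show 3*A+(ε+1) = (3*A+ε)+1 from rfl, Nat.factorial_succ, ih]
    rw [show P (ε+1) A = P ε A * (3*A+ε+1) from Finset.prod_range_succ _ _]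
    ring

/-- The exact integer identity behind the mod-9 Granville-type congruence. -/
lemma exact_id {A B ε δ : ℕ} (hBA : B ≤ A) (hδε : δ ≤ ε) :
    (3*A+ε).choose (3*B+δ) * (W B * P δ B * (W (A-B) * P (ε-δ) (A-B)))
      = A.choose B * (W A * P ε A) := by
  set C := A - B with hC
  set γ := ε - δ with hγ
  have hk : 3*B+δ ≤ 3*A+ε := by omega
  have e1 : (3*A+ε).choose (3*B+δ) * (3*B+δ)! * ((3*A+ε) - (3*B+δ))! = (3*A+ε)! :=
    Nat.choose_mul_factorial_mul_factorial hk
  have hsub : (3*A+ε) - (3*B+δ) = 3*C+γ := by omega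
  rw [hsub] at e1
  have e2 : A.choose B * B ! * C ! = A ! := by
    have := Nat.choose_mul_factorial_mul_factorial hBA
    rwa [← hC] at this
  rw [fact3e, fact3e, fact3e, ← e2] at e1
  have hA : A = B + C := by omega
  -- cancel 3^B * 3^C * B! * C!
  have hpos : 0 < 3^B * B ! * (3^C * C !) := by positivity
  apply Nat.eq_of_mul_eq_mul_right hpos
  calc (3*A+ε).choose (3*B+δ) * (W B * P δ B * (W C * P γ C)) * (3^B * B ! * (3^C * C !))
      = 3 ^ B * B ! * W B * P δ B * (3 ^ C * C ! * W C * P γ C) *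
          (3*A+ε).choose (3*B+δ) := by ring
    _ = 3 ^ A * (A.choose B * B ! * C !) * W A * P ε A := by
        rw [← e1]; ring
    _ = A.choose B * (W A * P ε A) * (3^B * B ! * (3^C * C !)) := by
        rw [hA, pow_add]; ring

lemma nine : (9 : ZMod 9) = 0 := by decide

lemma W_cast (A : ℕ) : ((W A : ℕ) : ZMod 9) = 2 ^ A := by
  induction A with
  | zero => simp [W]
  | succ A ih =>
    rw [W, Finset.prod_range_succ, ← W]
    push_cast [ih]
    have h9 : (9 : ZMod 9) = 0 := nine
    linear_combination (2:ZMod 9)^A * ((A:ZMod 9)^2 + A) * h9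

lemma P0_cast (A : ℕ) : ((P 0 A : ℕ) : ZMod 9) = 1 := by simp [P]

lemma P1_cast (A : ℕ) : ((P 1 A : ℕ) : ZMod 9) = 1 + 3 * A := by
  simp [P, Finset.prod_range_one]
  push_cast
  ring_nf

lemma P2_cast (A : ℕ) : ((P 2 A : ℕ) : ZMod 9) = 2 := by
  have : P 2 A = (3*A+1)*(3*A+2) := by
    simp [P, Finset.prod_range_succ]
  rw [this]
  push_cast
  linear_combination ((A:ZMod 9)^2 + A) * nine


/-- helper: cancel a unit `c` with explicit inverse `c'`. -/
lemma cancel_unit {x y c c' : ZMod 9} (h : x * c = y) (h1 : c * c' = 1) : x = y * c' := by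
  calc x = x * (c * c') := by rw [h1, mul_one]
    _ = (x * c) * c' := by ring
    _ = y * c' := by rw [h]

/-- Main cast identity: `C(3A+ε, 3B+δ) * Pδ(B) * Pγ(C) ≡ C(A,B) * Pε(A) (mod 9)`. -/
lemma cast_main {A B ε δ : ℕ} (hBA : B ≤ A) (hδε : δ ≤ ε) :
    ((3*A+ε).choose (3*B+δ) : ZMod 9) * ((P δ B : ℕ) : ZMod 9) * ((P (ε-δ) (A-B) : ℕ) : ZMod 9)
      = (A.choose B : ZMod 9) * ((P ε A : ℕ) : ZMod 9) := by
  have h := congrArg (fun x : ℕ => (x : ZMod 9)) (exact_id hBA hδε)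
  push_cast at h
  rw [W_cast, W_cast, W_cast] at h
  have hu : IsUnit ((2:ZMod 9)^B * 2^(A-B)) := by
    exact (IsUnit.of_mul_eq_one (a := (2:ZMod 9)) 5 (by decide)).pow B |>.mul
      ((IsUnit.of_mul_eq_one (a := (2:ZMod 9)) 5 (by decide)).pow (A-B))
  have h2A : (2:ZMod 9)^B * 2^(A-B) = 2^A := by
    rw [← pow_add]; congr 1; omega
  apply hu.mul_left_cancel
  rw [h2A]
  calc (2:ZMod 9)^A * (((3*A+ε).choose (3*B+δ) : ZMod 9) * ((P δ B : ℕ) : ZMod 9) *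
        ((P (ε-δ) (A-B) : ℕ) : ZMod 9))
      = ((3*A+ε).choose (3*B+δ) : ZMod 9) *
          (2^B * ((P δ B : ℕ) : ZMod 9) * (2^(A-B) * ((P (ε-δ) (A-B) : ℕ) : ZMod 9))) := by
        rw [← h2A]; ring
    _ = (A.choose B : ZMod 9) * (2 ^ A * ((P ε A : ℕ) : ZMod 9)) := by
        rw [← h]
    _ = (2:ZMod 9)^A * ((A.choose B : ZMod 9) * ((P ε A : ℕ) : ZMod 9)) := by ring

lemma inv13 (x : ZMod 9) : (1 + 3*x) * (1 + 6*x) = 1 := by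
  linear_combination (x + 2*x^2) * nine

lemma inv2 : (2 : ZMod 9) * 5 = 1 := by decide

/-- L(0,0) -/
lemma L00 {A B : ℕ} (hBA : B ≤ A) : ((3*A).choose (3*B) : ZMod 9) = (A.choose B : ZMod 9) := by
  have := cast_main (ε := 0) (δ := 0) hBA le_rfl
  simpa [P0_cast] using this

/-- L(1,0) : `C(3A+1, 3B) ≡ C(A,B)(1+3A)(1+6(A−B))`. -/
lemma L10 {A B : ℕ} (hBA : B ≤ A) :
    ((3*A+1).choose (3*B) : ZMod 9)
      = (A.choose B : ZMod 9) * ((1 + 3*A) * (1 + 6*((A:ZMod 9)-B))) := by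
  have h := cast_main (ε := 1) (δ := 0) hBA (by norm_num)
  rw [P0_cast, P1_cast, P1_cast] at h
  push_cast [Nat.cast_sub hBA] at h
  have h' : ((3*A+1).choose (3*B) : ZMod 9) * (1 + 3*((A:ZMod 9)-B))
      = (A.choose B : ZMod 9) * (1 + 3*A) := by
    calc ((3*A+1).choose (3*B) : ZMod 9) * (1 + 3*((A:ZMod 9)-B))
        = ((3*A+1).choose (3*B) : ZMod 9) * 1 * (1 + 3*((A:ZMod 9)-B)) := by ring
      _ = _ := h
  have := cancel_unit h' (inv13 ((A:ZMod 9)-B))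
  rw [this]; ring

/-- L(1,1) : `C(3A+1, 3B+1) ≡ C(A,B)(1+3A)(1+6B)`. -/
lemma L11 {A B : ℕ} (hBA : B ≤ A) :
    ((3*A+1).choose (3*B+1) : ZMod 9)
      = (A.choose B : ZMod 9) * ((1 + 3*A) * (1 + 6*(B:ZMod 9))) := by
  have h := cast_main (ε := 1) (δ := 1) hBA le_rfl
  rw [P1_cast, P0_cast, P1_cast] at h
  have h' : ((3*A+1).choose (3*B+1) : ZMod 9) * (1 + 3*(B:ZMod 9))
      = (A.choose B : ZMod 9) * (1 + 3*A) := by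
    calc ((3*A+1).choose (3*B+1) : ZMod 9) * (1 + 3*(B:ZMod 9))
        = ((3*A+1).choose (3*B+1) : ZMod 9) * (1 + 3*(B:ZMod 9)) * 1 := by ring
      _ = _ := h
  have := cancel_unit h' (inv13 (B:ZMod 9))
  rw [this]; ring

/-- L(2,0) : `C(3A+2, 3B) ≡ C(A,B)`. -/
lemma L20 {A B : ℕ} (hBA : B ≤ A) :
    ((3*A+2).choose (3*B) : ZMod 9) = (A.choose B : ZMod 9) := by
  have h := cast_main (ε := 2) (δ := 0) hBA (by norm_num)
  rw [P0_cast, P2_cast, P2_cast] at h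
  have h' : ((3*A+2).choose (3*B) : ZMod 9) * 2 = (A.choose B : ZMod 9) * 2 := by
    calc ((3*A+2).choose (3*B) : ZMod 9) * 2
        = ((3*A+2).choose (3*B) : ZMod 9) * 1 * 2 := by ring
      _ = _ := h
  have := cancel_unit h' inv2
  rw [this]; linear_combination (A.choose B : ZMod 9) * (by decide : (2*5 : ZMod 9) = 1)

/-- L(2,2) : `C(3A+2, 3B+2) ≡ C(A,B)`. -/
lemma L22 {A B : ℕ} (hBA : B ≤ A) :
    ((3*A+2).choose (3*B+2) : ZMod 9) = (A.choose B : ZMod 9) := by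
  have h := cast_main (ε := 2) (δ := 2) hBA le_rfl
  rw [P2_cast, P0_cast, P2_cast] at h
  have h' : ((3*A+2).choose (3*B+2) : ZMod 9) * 2 = (A.choose B : ZMod 9) * 2 := by
    calc ((3*A+2).choose (3*B+2) : ZMod 9) * 2
        = ((3*A+2).choose (3*B+2) : ZMod 9) * 2 * 1 := by ring
      _ = _ := h
  have := cancel_unit h' inv2
  rw [this]; linear_combination (A.choose B : ZMod 9) * (by decide : (2*5 : ZMod 9) = 1)

/-- L(2,1) : `C(3A+2, 3B+1) ≡ 2·C(A,B)(1+6B)(1+6(A−B))`. -/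
lemma L21 {A B : ℕ} (hBA : B ≤ A) :
    ((3*A+2).choose (3*B+1) : ZMod 9)
      = 2 * (A.choose B : ZMod 9) * ((1 + 6*(B:ZMod 9)) * (1 + 6*((A:ZMod 9)-B))) := by
  have h := cast_main (ε := 2) (δ := 1) hBA (by norm_num)
  rw [P1_cast, P1_cast, P2_cast] at h
  push_cast [Nat.cast_sub hBA] at h
  have h1 := cancel_unit h (inv13 ((A:ZMod 9)-B))
  have h2 := cancel_unit h1 (inv13 (B:ZMod 9))
  rw [h2]; ring


lemma three_dvd_choose {A B ε δ : ℕ} (hδ : δ < 3) (h : ε < δ) :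
    3 ∣ (3*A+ε).choose (3*B+δ) := by
  haveI : Fact (Nat.Prime 3) := ⟨by norm_num⟩
  have := Choose.choose_modEq_choose_mod_mul_choose_div_nat (p := 3)
    (n := 3*A+ε) (k := 3*B+δ)
  have hε3 : ε < 3 := lt_trans h hδ
  rw [Nat.mul_add_mod, Nat.mul_add_mod, Nat.mod_eq_of_lt hε3, Nat.mod_eq_of_lt hδ,
    Nat.choose_eq_zero_of_lt h, zero_mul] at this
  exact (Nat.modEq_zero_iff_dvd).mp this

lemma pow_zero9 {c : ℕ} (h3 : 3 ∣ c) {e : ℕ} (he : 2 ≤ e) : ((c : ℕ) : ZMod 9)^e = 0 := by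
  obtain ⟨x, rfl⟩ := h3
  push_cast
  rw [mul_pow]
  have : (3 : ZMod 9)^e = 0 := by
    have : (3 : ZMod 9)^e = 3^2 * 3^(e-2) := by rw [← pow_add]; congr 1; omega
    rw [this, show (3:ZMod 9)^2 = 0 from by decide, zero_mul]
  rw [this, zero_mul]

lemma cube13 (a : ZMod 9) : (1 + 3*a)^3 = 1 := by
  linear_combination (a + 3*a^2 + 3*a^3) * nine

lemma pow_r {r : ℕ} (hr3 : r % 3 = 2) (a : ZMod 9) : (1 + 3*a)^r = 1 + 6*a := by
  have h : (1+3*a)^r = ((1+3*a)^3)^(r/3) * (1+3*a)^2 := by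
    rw [← pow_mul, ← pow_add]; congr 1; omega
  rw [h, cube13, one_pow, one_mul]
  linear_combination a^2 * nine

lemma pow_s {s : ℕ} (hs3 : s % 3 = 0) (a : ZMod 9) : (1 + 3*a)^s = 1 := by
  have h : (1+3*a)^s = ((1+3*a)^3)^(s/3) := by
    rw [← pow_mul]; congr 1; omega
  rw [h, cube13, one_pow]

lemma two_pow_s {s : ℕ} (hs6 : s % 6 = 0) : (2 : ZMod 9)^s = 1 := by
  have h : (2:ZMod 9)^s = ((2:ZMod 9)^6)^(s/6) := by
    rw [← pow_mul]; congr 1; omega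
  rw [h, show (2:ZMod 9)^6 = 1 from by decide, one_pow]

lemma sum_range_triple {M : Type*} [AddCommMonoid M] (N : ℕ) (f : ℕ → M) :
    ∑ k ∈ Finset.range (3*N), f k = ∑ K ∈ Finset.range N, (f (3*K) + f (3*K+1) + f (3*K+2)) := by
  induction N with
  | zero => simp
  | succ N ih =>
    rw [Finset.sum_range_succ, ← ih, show 3*(N+1) = (3*N+1+1)+1 from by ring,
      Finset.sum_range_succ, Finset.sum_range_succ, Finset.sum_range_succ]
    abel


lemma apery_step {r s : ℕ} (hr3 : r % 3 = 2) (hs6 : s % 6 = 0) (hs : 0 < s)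
    (q j : ℕ) (hj : j ≤ 2) :
    (apery r s (3*q+j) : ZMod 9)
      = (if j = 1 then 2 + 6*(q:ZMod 9) else 1) * (apery r s q : ZMod 9) := by
  have hr2 : 2 ≤ r := by omega
  have hs2 : 2 ≤ s := by omega
  have hs3 : s % 3 = 0 := by omega
  have hr0 : r ≠ 0 := by omega
  have hext : apery r s (3*q+j)
      = ∑ k ∈ Finset.range (3*(q+1)), ((3*q+j).choose k ^ r * ((3*q+j)+k).choose k ^ s) := by
    rw [apery]
    apply Finset.sum_subset (Finset.range_subset_range.mpr (by omega))
    intro k hk hk'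
    simp only [Finset.mem_range] at hk hk'
    rw [Nat.choose_eq_zero_of_lt (by omega), zero_pow hr0, zero_mul]
  rw [hext, sum_range_triple]
  push_cast
  rw [apery]
  push_cast
  rw [Finset.mul_sum]
  apply Finset.sum_congr rfl
  intro K hK
  have hKq : K ≤ q := by simp only [Finset.mem_range] at hK; omega
  have hKq' : K ≤ q + K := Nat.le_add_left _ _
  interval_cases j
  · -- j = 0
    have hz1 : ((((3*q+0).choose (3*K+1) : ℕ)) : ZMod 9)^r = 0 :=
      pow_zero9 (three_dvd_choose (by norm_num) (by norm_num)) hr2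
    have hz2 : ((((3*q+0).choose (3*K+2) : ℕ)) : ZMod 9)^r = 0 :=
      pow_zero9 (three_dvd_choose (by norm_num) (by norm_num)) hr2
    rw [hz1, hz2, zero_mul, zero_mul, add_zero, add_zero]
    rw [show 3*q+0 = 3*q from by ring, show 3*q+3*K = 3*(q+K) from by ring,
      L00 hKq, L00 hKq']
    simp
  · -- j = 1
    have hz : ((((3*q+1).choose (3*K+2) : ℕ)) : ZMod 9)^r = 0 :=
      pow_zero9 (three_dvd_choose (by norm_num) (by norm_num)) hr2
    rw [hz, zero_mul, add_zero]
    rw [show 3*q+1+3*K = 3*(q+K)+1 from by ring,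
      show 3*q+1+(3*K+1) = 3*(q+K)+2 from by ring,
      L10 hKq, L11 hKq, L10 hKq', L21 hKq']
    push_cast
    have e1 : ((1:ZMod 9) + 3*(q:ZMod 9)) * (1 + 6*((q:ZMod 9)-(K:ZMod 9)))
        = 1 + 3*(K:ZMod 9) := by
      linear_combination ((q:ZMod 9) - K + 2*(q:ZMod 9)^2 - 2*(q:ZMod 9)*K) * nine
    have e2 : ((1:ZMod 9) + 3*((q:ZMod 9)+(K:ZMod 9))) * (1 + 6*((q:ZMod 9)+(K:ZMod 9)-(K:ZMod 9)))
        = 1 + 3*(K:ZMod 9) := by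
      linear_combination ((q:ZMod 9) + 2*(q:ZMod 9)^2 + 2*(q:ZMod 9)*K) * nine
    have e3 : ((1:ZMod 9) + 3*(q:ZMod 9)) * (1 + 6*(K:ZMod 9))
        = 1 + 3*((q:ZMod 9) + 2*(K:ZMod 9)) := by
      linear_combination (2*(q:ZMod 9)*(K:ZMod 9)) * nine
    have e4 : ((1:ZMod 9) + 6*(K:ZMod 9)) * (1 + 6*((q:ZMod 9)+(K:ZMod 9)-(K:ZMod 9)))
        = 1 + 3*(2*(q:ZMod 9) + 2*(K:ZMod 9)) := by
      linear_combination (4*(q:ZMod 9)*(K:ZMod 9)) * nine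
    rw [e1, e2, e3, e4]
    simp only [mul_pow]
    rw [pow_r hr3 (K:ZMod 9), pow_r hr3 ((q:ZMod 9) + 2*(K:ZMod 9)),
      pow_s hs3 (K:ZMod 9), pow_s hs3 (2*(q:ZMod 9) + 2*(K:ZMod 9)), two_pow_s hs6]
    set x := ((q.choose K : ℕ) : ZMod 9) with hx
    set y := (((q+K).choose K : ℕ) : ZMod 9) with hy
    linear_combination (2*(K:ZMod 9)*x^r*y^s) * nine
  · -- j = 2
    have hz1 : ((((3*q+2+(3*K+1)).choose (3*K+1) : ℕ)) : ZMod 9)^s = 0 := by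
      rw [show 3*q+2+(3*K+1) = 3*(q+K+1)+0 from by ring]
      exact pow_zero9 (three_dvd_choose (by norm_num) (by norm_num)) hs2
    have hz2 : ((((3*q+2+(3*K+2)).choose (3*K+2) : ℕ)) : ZMod 9)^s = 0 := by
      rw [show 3*q+2+(3*K+2) = 3*(q+K+1)+1 from by ring]
      exact pow_zero9 (three_dvd_choose (by norm_num) (by norm_num)) hs2
    rw [hz1, hz2, mul_zero, mul_zero, add_zero, add_zero]
    rw [show 3*q+2+3*K = 3*(q+K)+2 from by ring, L20 hKq, L20 hKq']
    simp


lemma digitCount_split (d : ℕ → ℕ) (m v : ℕ) :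
    digitCount d (m+1) v = (if d 0 = v then 1 else 0) + digitCount (fun i => d (i+1)) m v := by
  rw [digitCount, digitCount, Finset.card_filter, Finset.card_filter, Finset.sum_range_succ',
    add_comm]

lemma occ_split (d : ℕ → ℕ) (m a b : ℕ) :
    occ d (m+1) a b = (if d 1 = a ∧ d 0 = b then 1 else 0) + occ (fun i => d (i+1)) m a b := by
  have hins : Finset.Icc 1 (m+1+1)
      = insert 1 ((Finset.Icc 1 (m+1)).map (addRightEmbedding 1)) := by
    rw [Finset.map_add_right_Icc]
    ext x; simp only [Finset.mem_Icc, Finset.mem_insert]; omega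
  have hnotmem : (1:ℕ) ∉ (Finset.Icc 1 (m+1)).map (addRightEmbedding 1) := by
    rw [Finset.map_add_right_Icc]; simp
  rw [occ, occ, hins, Finset.filter_insert, Finset.filter_map]
  have hfil2 : Finset.filter ((fun ν => d ν = a ∧ d (ν - 1) = b) ∘ (addRightEmbedding 1))
        (Finset.Icc 1 (m+1))
      = Finset.filter (fun ν => (fun i => d (i+1)) ν = a ∧ (fun i => d (i+1)) (ν-1) = b)
        (Finset.Icc 1 (m+1)) := by
    apply Finset.filter_congr
    intro x hx
    simp only [Finset.mem_Icc] at hx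
    have h1 : x - 1 + 1 = x := by omega
    have h2 : x + 1 - 1 = x := by omega
    simp only [Function.comp_apply, addRightEmbedding_apply, h1, h2]
  rw [hfil2]
  by_cases hc : d 1 = a ∧ d 0 = b
  · rw [if_pos (show d 1 = a ∧ d (1-1) = b from hc), if_pos hc,
      Finset.card_insert_of_notMem (fun h => hnotmem ((Finset.map_subset_map.mpr (Finset.filter_subset _ _)) h)),
      Finset.card_map]
    rw [Nat.add_comm]
  · rw [if_neg (show ¬(d 1 = a ∧ d (1-1) = b) from hc), if_neg hc, Finset.card_map, zero_add]

/-- Main digit formula for the Apéry numbers mod 9. -/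
lemma apery_digits {r s : ℕ} (hr3 : r % 3 = 2) (hs6 : s % 6 = 0) (hs : 0 < s) :
    ∀ m d n, (∀ i : ℕ, d i ≤ 2) → (∀ i, m < i → d i = 0) →
    n = (∑ i ∈ Finset.range (m+1), d i * 3^i) →
    (apery r s n : ZMod 9)
      = 2^(digitCount d m 1) * (1 + 3*(((occ d m 1 1 + 2*occ d m 2 1 : ℕ)) : ZMod 9)) := by
  intro m
  induction m with
  | zero =>
    intro d n hd2 hd0 hn
    have hn' : n = 3*0 + d 0 := by simpa using hn
    have h1 : d 1 = 0 := hd0 1 (by omega)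
    have hocc : ∀ a, a ≠ 0 → occ d 0 a 1 = 0 := by
      intro a ha
      simp [occ, Finset.Icc_self, Finset.filter_singleton, h1, Ne.symm ha]
    have hdc : digitCount d 0 1 = (if d 0 = 1 then 1 else 0) := by
      simp [digitCount, Finset.range_one, Finset.filter_singleton, apply_ite Finset.card]
    rw [hn', apery_step hr3 hs6 hs 0 (d 0) (hd2 0), apery_zero, hdc,
      hocc 1 one_ne_zero, hocc 2 (by omega)]
    rcases (by have := hd2 0; omega : d 0 = 0 ∨ d 0 = 1 ∨ d 0 = 2) with h0|h0|h0 <;>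
      norm_num [h0]
  | succ m IH =>
    intro d n hd2 hd0 hn
    set R := ∑ i ∈ Finset.range m, d (i+1+1) * 3^i with hRdef
    set q := ∑ i ∈ Finset.range (m+1), d (i+1) * 3^i with hqdef
    have hq : n = 3*q + d 0 := by
      rw [hn, Finset.sum_range_succ']
      simp only [pow_zero, mul_one, hqdef, Finset.mul_sum]
      congr 1
      apply Finset.sum_congr rfl
      intro i _
      ring
    have ihq := IH (fun i => d (i+1)) q (fun i => hd2 (i+1))
      (fun i hi => hd0 (i+1) (by omega)) rfl
    have hq3 : (6:ZMod 9)*(q:ZMod 9) = 6*((d 1 : ℕ):ZMod 9) := by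
      have hq1 : q = 3*R + d 1 := by
        rw [hqdef, Finset.sum_range_succ']
        simp only [pow_zero, mul_one, hRdef, Finset.mul_sum]
        congr 1
        apply Finset.sum_congr rfl
        intro i _
        ring
      rw [hq1]
      push_cast
      linear_combination (2*((R:ℕ):ZMod 9)) * nine
    rw [hq, apery_step hr3 hs6 hs q (d 0) (hd2 0), ihq, digitCount_split, occ_split, occ_split]
    set t' := digitCount (fun i => d (i+1)) m 1 with ht'
    set u := occ (fun i => d (i+1)) m 1 1 with hu
    set v := occ (fun i => d (i+1)) m 2 1 with hv
    rcases (by have := hd2 0; omega : d 0 = 0 ∨ d 0 = 1 ∨ d 0 = 2) with h0|h0|h0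
    · simp [h0]
    · simp only [h0, eq_self_iff_true, and_true, if_true]
      rcases (by have := hd2 1; omega : d 1 = 0 ∨ d 1 = 1 ∨ d 1 = 2) with h1|h1|h1
      · rw [hq3, h1]
        norm_num
        ring
      · rw [hq3, h1]
        push_cast
        norm_num
        linear_combination ((2*(u:ZMod 9)+4*(v:ZMod 9))*(2:ZMod 9)^t') * nine
      · rw [hq3, h1]
        push_cast
        norm_num
        linear_combination ((4*(u:ZMod 9)+8*(v:ZMod 9))*(2:ZMod 9)^t') * nine
    · simp [h0]


lemma endgame (X t u v : ℕ)
    (hX : X % 9 = (2^(t%2) * (1+3*((t/2+u+2*v)%3))) % 9) :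
    (X ≡ 1 [MOD 9] ↔ ∃ e, t = 2 * e ∧ ((e : ℤ) + (u : ℤ) - (v : ℤ)) % 3 = 0) ∧
    (X ≡ 4 [MOD 9] ↔ ∃ e, t = 2 * e ∧ ((e : ℤ) + (u : ℤ) - (v : ℤ)) % 3 = 1) ∧
    (X ≡ 7 [MOD 9] ↔ ∃ e, t = 2 * e ∧ ((e : ℤ) + (u : ℤ) - (v : ℤ)) % 3 = 2) ∧
    (X ≡ 2 [MOD 9] ↔ ∃ e, t = 2 * e + 1 ∧ ((e : ℤ) + (u : ℤ) - (v : ℤ)) % 3 = 0) ∧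
    (X ≡ 8 [MOD 9] ↔ ∃ e, t = 2 * e + 1 ∧ ((e : ℤ) + (u : ℤ) - (v : ℤ)) % 3 = 1) ∧
    (X ≡ 5 [MOD 9] ↔ ∃ e, t = 2 * e + 1 ∧ ((e : ℤ) + (u : ℤ) - (v : ℤ)) % 3 = 2) ∧
    ¬ (X ≡ 3 [MOD 9]) ∧
    ¬ (X ≡ 6 [MOD 9]) := by
  rcases (by omega : t % 2 = 0 ∨ t % 2 = 1) with hb | hb <;>
    rcases (by omega : (t/2+u+2*v) % 3 = 0 ∨ (t/2+u+2*v) % 3 = 1 ∨ (t/2+u+2*v) % 3 = 2)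
      with hM | hM | hM
  · simp only [hb, hM] at hX
    norm_num at hX
    exact ⟨⟨fun _ => ⟨t/2, by omega, by omega⟩, fun _ => show X % 9 = 1 % 9 by omega⟩,
      ⟨fun h => absurd (show X % 9 = 4 % 9 from h) (by omega), fun ⟨e, he, hm⟩ => absurd hm (by omega)⟩,
      ⟨fun h => absurd (show X % 9 = 7 % 9 from h) (by omega), fun ⟨e, he, hm⟩ => absurd hm (by omega)⟩,
      ⟨fun h => absurd (show X % 9 = 2 % 9 from h) (by omega), fun ⟨e, he, hm⟩ => absurd hm (by omega)⟩,
      ⟨fun h => absurd (show X % 9 = 8 % 9 from h) (by omega), fun ⟨e, he, hm⟩ => absurd hm (by omega)⟩,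
      ⟨fun h => absurd (show X % 9 = 5 % 9 from h) (by omega), fun ⟨e, he, hm⟩ => absurd hm (by omega)⟩,
      fun h => absurd (show X % 9 = 3 % 9 from h) (by omega),
      fun h => absurd (show X % 9 = 6 % 9 from h) (by omega)⟩
  · simp only [hb, hM] at hX
    norm_num at hX
    exact ⟨⟨fun h => absurd (show X % 9 = 1 % 9 from h) (by omega), fun ⟨e, he, hm⟩ => absurd hm (by omega)⟩,
      ⟨fun _ => ⟨t/2, by omega, by omega⟩, fun _ => show X % 9 = 4 % 9 by omega⟩,
      ⟨fun h => absurd (show X % 9 = 7 % 9 from h) (by omega), fun ⟨e, he, hm⟩ => absurd hm (by omega)⟩,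
      ⟨fun h => absurd (show X % 9 = 2 % 9 from h) (by omega), fun ⟨e, he, hm⟩ => absurd hm (by omega)⟩,
      ⟨fun h => absurd (show X % 9 = 8 % 9 from h) (by omega), fun ⟨e, he, hm⟩ => absurd hm (by omega)⟩,
      ⟨fun h => absurd (show X % 9 = 5 % 9 from h) (by omega), fun ⟨e, he, hm⟩ => absurd hm (by omega)⟩,
      fun h => absurd (show X % 9 = 3 % 9 from h) (by omega),
      fun h => absurd (show X % 9 = 6 % 9 from h) (by omega)⟩
  · simp only [hb, hM] at hX
    norm_num at hX
    exact ⟨⟨fun h => absurd (show X % 9 = 1 % 9 from h) (by omega), fun ⟨e, he, hm⟩ => absurd hm (by omega)⟩,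
      ⟨fun h => absurd (show X % 9 = 4 % 9 from h) (by omega), fun ⟨e, he, hm⟩ => absurd hm (by omega)⟩,
      ⟨fun _ => ⟨t/2, by omega, by omega⟩, fun _ => show X % 9 = 7 % 9 by omega⟩,
      ⟨fun h => absurd (show X % 9 = 2 % 9 from h) (by omega), fun ⟨e, he, hm⟩ => absurd hm (by omega)⟩,
      ⟨fun h => absurd (show X % 9 = 8 % 9 from h) (by omega), fun ⟨e, he, hm⟩ => absurd hm (by omega)⟩,
      ⟨fun h => absurd (show X % 9 = 5 % 9 from h) (by omega), fun ⟨e, he, hm⟩ => absurd hm (by omega)⟩,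
      fun h => absurd (show X % 9 = 3 % 9 from h) (by omega),
      fun h => absurd (show X % 9 = 6 % 9 from h) (by omega)⟩
  · simp only [hb, hM] at hX
    norm_num at hX
    exact ⟨⟨fun h => absurd (show X % 9 = 1 % 9 from h) (by omega), fun ⟨e, he, hm⟩ => absurd hm (by omega)⟩,
      ⟨fun h => absurd (show X % 9 = 4 % 9 from h) (by omega), fun ⟨e, he, hm⟩ => absurd hm (by omega)⟩,
      ⟨fun h => absurd (show X % 9 = 7 % 9 from h) (by omega), fun ⟨e, he, hm⟩ => absurd hm (by omega)⟩,
      ⟨fun _ => ⟨t/2, by omega, by omega⟩, fun _ => show X % 9 = 2 % 9 by omega⟩,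
      ⟨fun h => absurd (show X % 9 = 8 % 9 from h) (by omega), fun ⟨e, he, hm⟩ => absurd hm (by omega)⟩,
      ⟨fun h => absurd (show X % 9 = 5 % 9 from h) (by omega), fun ⟨e, he, hm⟩ => absurd hm (by omega)⟩,
      fun h => absurd (show X % 9 = 3 % 9 from h) (by omega),
      fun h => absurd (show X % 9 = 6 % 9 from h) (by omega)⟩
  · simp only [hb, hM] at hX
    norm_num at hX
    exact ⟨⟨fun h => absurd (show X % 9 = 1 % 9 from h) (by omega), fun ⟨e, he, hm⟩ => absurd hm (by omega)⟩,
      ⟨fun h => absurd (show X % 9 = 4 % 9 from h) (by omega), fun ⟨e, he, hm⟩ => absurd hm (by omega)⟩,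
      ⟨fun h => absurd (show X % 9 = 7 % 9 from h) (by omega), fun ⟨e, he, hm⟩ => absurd hm (by omega)⟩,
      ⟨fun h => absurd (show X % 9 = 2 % 9 from h) (by omega), fun ⟨e, he, hm⟩ => absurd hm (by omega)⟩,
      ⟨fun _ => ⟨t/2, by omega, by omega⟩, fun _ => show X % 9 = 8 % 9 by omega⟩,
      ⟨fun h => absurd (show X % 9 = 5 % 9 from h) (by omega), fun ⟨e, he, hm⟩ => absurd hm (by omega)⟩,
      fun h => absurd (show X % 9 = 3 % 9 from h) (by omega),
      fun h => absurd (show X % 9 = 6 % 9 from h) (by omega)⟩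
  · simp only [hb, hM] at hX
    norm_num at hX
    exact ⟨⟨fun h => absurd (show X % 9 = 1 % 9 from h) (by omega), fun ⟨e, he, hm⟩ => absurd hm (by omega)⟩,
      ⟨fun h => absurd (show X % 9 = 4 % 9 from h) (by omega), fun ⟨e, he, hm⟩ => absurd hm (by omega)⟩,
      ⟨fun h => absurd (show X % 9 = 7 % 9 from h) (by omega), fun ⟨e, he, hm⟩ => absurd hm (by omega)⟩,
      ⟨fun h => absurd (show X % 9 = 2 % 9 from h) (by omega), fun ⟨e, he, hm⟩ => absurd hm (by omega)⟩,
      ⟨fun h => absurd (show X % 9 = 8 % 9 from h) (by omega), fun ⟨e, he, hm⟩ => absurd hm (by omega)⟩,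
      ⟨fun _ => ⟨t/2, by omega, by omega⟩, fun _ => show X % 9 = 5 % 9 by omega⟩,
      fun h => absurd (show X % 9 = 3 % 9 from h) (by omega),
      fun h => absurd (show X % 9 = 6 % 9 from h) (by omega)⟩

lemma pow4 (e : ℕ) : (2:ZMod 9)^(2*e) = 1 + 3*(e:ZMod 9) := by
  induction e with
  | zero => simp
  | succ e ih =>
    rw [show 2*(e+1) = 2*e+2 from by ring, pow_add, ih]
    push_cast
    linear_combination (e : ZMod 9) * nine

lemma three_mul_mod (x : ℕ) : (3:ZMod 9)*((x % 3 : ℕ):ZMod 9) = 3*(x:ZMod 9) := by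
  conv_rhs => rw [show x = 3*(x/3) + x%3 from by omega]
  push_cast
  linear_combination (-((x/3 : ℕ) : ZMod 9)) * nine

end AperyAux

/-- Apéry numbers mod 9 for `r ≡ 2 (mod 3)`, `s ≡ 0 (mod 6)`. -/
theorem apery_mod_nine_r2_s0 (r s : ℕ) (hr : 0 < r) (hs : 0 < s) (hr3 : r % 3 = 2) (hs6 : s % 6 = 0)
    (n m : ℕ) (d : ℕ → ℕ) (hd2 : ∀ i, d i ≤ 2) (hd0 : ∀ i, m < i → d i = 0)
    (hn : n = ∑ i ∈ Finset.range (m + 1), d i * 3 ^ i) :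
    (apery r s n ≡ 1 [MOD 9] ↔ ∃ e, digitCount d m 1 = 2 * e ∧
      ((e : ℤ) + (occ d m 1 1 : ℤ) - (occ d m 2 1 : ℤ)) % 3 = 0) ∧
    (apery r s n ≡ 4 [MOD 9] ↔ ∃ e, digitCount d m 1 = 2 * e ∧
      ((e : ℤ) + (occ d m 1 1 : ℤ) - (occ d m 2 1 : ℤ)) % 3 = 1) ∧
    (apery r s n ≡ 7 [MOD 9] ↔ ∃ e, digitCount d m 1 = 2 * e ∧
      ((e : ℤ) + (occ d m 1 1 : ℤ) - (occ d m 2 1 : ℤ)) % 3 = 2) ∧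
    (apery r s n ≡ 2 [MOD 9] ↔ ∃ e, digitCount d m 1 = 2 * e + 1 ∧
      ((e : ℤ) + (occ d m 1 1 : ℤ) - (occ d m 2 1 : ℤ)) % 3 = 0) ∧
    (apery r s n ≡ 8 [MOD 9] ↔ ∃ e, digitCount d m 1 = 2 * e + 1 ∧
      ((e : ℤ) + (occ d m 1 1 : ℤ) - (occ d m 2 1 : ℤ)) % 3 = 1) ∧
    (apery r s n ≡ 5 [MOD 9] ↔ ∃ e, digitCount d m 1 = 2 * e + 1 ∧
      ((e : ℤ) + (occ d m 1 1 : ℤ) - (occ d m 2 1 : ℤ)) % 3 = 2) ∧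
    ¬ (apery r s n ≡ 3 [MOD 9]) ∧
    ¬ (apery r s n ≡ 6 [MOD 9]) := by
  have key := AperyAux.apery_digits hr3 hs6 hs m d n hd2 hd0 hn
  set t := digitCount d m 1 with ht
  set u := occ d m 1 1 with hu
  set v := occ d m 2 1 with hv
  have h2t : (2:ZMod 9)^t = 2^(t%2) * (1+3*((t/2 : ℕ):ZMod 9)) := by
    conv_lhs => rw [show t = 2*(t/2) + t%2 from by omega]
    rw [pow_add, AperyAux.pow4]
    ring
  have key2 : (apery r s n : ZMod 9)
      = ((2^(t%2) * (1+3*((t/2+u+2*v)%3)) : ℕ) : ZMod 9) := by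
    push_cast
    rw [key, h2t, AperyAux.three_mul_mod]
    push_cast
    linear_combination
      ((2:ZMod 9)^(t%2) * ((t/2:ℕ):ZMod 9) * ((u:ZMod 9)+2*(v:ZMod 9))) * AperyAux.nine
  have hX : apery r s n % 9 = (2^(t%2) * (1+3*((t/2+u+2*v)%3))) % 9 :=
    (ZMod.natCast_eq_natCast_iff _ _ _).mp key2
  exact AperyAux.endgame _ t u v hX


end AperyProof
end

section
/- Let r and s be positive integers such that either (r \equiv 2 (mod 6) and s \equiv 1 (mod 6)) or (r \equiv 5 (mod 6), s \equiv 1 (mod 6), and s \ge 7) (in particular this covers the classical Apéry numbers a_n(2,1)). Then for every nonnegative integer n: (i) a_n(r,s) \equiv 1 (mod 9) iff every digit of n is 0 or 2; (ii) a_n(r,s) \equiv 3 (mod 9) iff the 3-adic expansion of n has exactly one occurrence of the string 01 (including the case of a leading digit 1), no occurrence of the string 11 or 21, and all digits of n not belonging to this occurrence are 0 or 2; (iii) a_n(r,s) \equiv 6 (mod 9) iff the 3-adic expansion of n has exactly one occurrence of the string 21 and all digits of n not belonging to this occurrence are 0 or 2; (iv) in all other cases 9 divides a_n(r,s); in particular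 a_n(r,s) is never \equiv 2, 4, 5, 7, or 8 (mod 9). -/
open Finset

abbrev Z9 := ZMod 9

lemma h9 : (9 : Z9) = 0 := by decide

lemma inv13 (x : Z9) : (1 + 3*x) * (1 + 6*x) = 1 := by
  linear_combination (x + 2*x^2) * h9

lemma inv23 (x : Z9) : (2 + 3*x) * (5 + 6*x) = 1 := by
  linear_combination (1 + 3*x + 2*x^2) * h9

lemma pow13_3 (x : Z9) : (1 + 3*x)^3 = 1 := by
  linear_combination (x + 3*x^2 + 3*x^3) * h9

lemma pow13_r {r : ℕ} (hr : r % 3 = 2) (x : Z9) : (1 + 3*x)^r = 1 + 6*x := by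
  have h := Nat.div_add_mod r 3
  rw [hr] at h
  rw [← h, pow_add, pow_mul, pow13_3, one_pow, one_mul]
  linear_combination x^2 * h9

lemma pow13_s {s : ℕ} (hs : s % 3 = 1) (x : Z9) : (1 + 3*x)^s = 1 + 3*x := by
  have h := Nat.div_add_mod s 3
  rw [hs] at h
  rw [← h, pow_add, pow_mul, pow13_3, one_pow, one_mul, pow_one]

lemma pow3x {r : ℕ} (hr : 2 ≤ r) (x : Z9) : (3*x)^r = 0 := by
  obtain ⟨t, rfl⟩ := Nat.exists_eq_add_of_le hr
  rw [pow_add]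
  have : (3*x)^2 = 0 := by linear_combination x^2 * h9
  rw [this, zero_mul]

lemma pow23_2 (x : Z9) : (2 + 3*x)^2 = 4 + 3*x := by
  linear_combination (x + x^2) * h9

lemma pow23_6 (x : Z9) : (2 + 3*x)^6 = 1 := by
  have : (2 + 3*x)^6 = ((2+3*x)^2)^3 := by ring
  rw [this, pow23_2, show (4 : Z9) + 3*x = 1 + 3*(1+x) by ring, pow13_3]

lemma pow23_r2 {r : ℕ} (hr : r % 6 = 2) (x : Z9) : (2 + 3*x)^r = 4 + 3*x := by
  have h := Nat.div_add_mod r 6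
  rw [hr] at h
  rw [← h, pow_add, pow_mul, pow23_6, one_pow, one_mul, pow23_2]

lemma pow23_s (hs : s % 6 = 1) (x : Z9) : (2 + 3*x)^s = 2 + 3*x := by
  have h := Nat.div_add_mod s 6
  rw [hs] at h
  rw [← h, pow_add, pow_mul, pow23_6, one_pow, one_mul, pow_one]

-- triple Pascal
lemma triple_pascal (n k : ℕ) :
    (n+3).choose (k+3) = n.choose k + 3*(n.choose (k+1)) + 3*(n.choose (k+2)) + n.choose (k+3) := by
  rw [show n+3 = (n+2)+1 from rfl, show k+3 = (k+2)+1 from rfl, Nat.choose_succ_succ,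
    show n+2 = (n+1)+1 from rfl, show k+2 = (k+1)+1 from rfl, Nat.choose_succ_succ,
    Nat.choose_succ_succ (n+1) (k+2), Nat.choose_succ_succ, Nat.choose_succ_succ n (k+1),
    Nat.choose_succ_succ n (k+2)]
  ring

-- divisibility
lemma dvd31 (a b : ℕ) : 3 ∣ (3*a).choose (3*b+1) := by
  rcases le_or_gt (3*b+1) (3*a) with h | h
  · have h1 := Nat.choose_succ_right_eq (3*a) (3*b)
    have h2 : 3*a - 3*b = 3*(a-b) := by omega
    rw [h2] at h1
    have h3 : 3 ∣ (3*a).choose (3*b+1) * (3*b+1) := ⟨(3*a).choose (3*b) * (a-b), by rw [h1]; ring⟩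
    have hcop : Nat.Coprime 3 (3*b+1) := (Nat.prime_three.coprime_iff_not_dvd).2 (by omega)
    exact hcop.dvd_of_dvd_mul_right h3
  · rw [Nat.choose_eq_zero_of_lt h]; exact dvd_zero 3
lemma dvd32 (a b : ℕ) : 3 ∣ (3*a).choose (3*b+2) := by
  have h1 := Nat.choose_succ_right_eq (3*a) (3*b+1)
  obtain ⟨t, ht⟩ := dvd31 a b
  have h3 : 3 ∣ (3*a).choose (3*b+2) * (3*b+2) := by
    rw [show 3*b+1+1 = 3*b+2 from rfl] at h1
    rw [h1, ht]; exact ⟨t * (3*a - (3*b+1)), by ring⟩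
  have hcop : Nat.Coprime 3 (3*b+2) := (Nat.prime_three.coprime_iff_not_dvd).2 (by omega)
  exact hcop.dvd_of_dvd_mul_right h3

-- core lemma J
lemma chooseJ (a b : ℕ) : (((3*a).choose (3*b) : ℕ) : Z9) = ((a.choose b : ℕ) : Z9) := by
  induction a generalizing b with
  | zero =>
    cases b with
    | zero => simp
    | succ b => simp [Nat.choose_eq_zero_of_lt]
  | succ a ih =>
    cases b with
    | zero => simp
    | succ b =>
      have e1 : 3*(a+1) = 3*a+3 := by ring
      have e2 : 3*(b+1) = 3*b+3 := by ring
      rw [e1, e2, triple_pascal]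
      obtain ⟨t1, ht1⟩ := dvd31 a b
      obtain ⟨t2, ht2⟩ := dvd32 a b
      push_cast
      rw [ht1, ht2]
      push_cast
      have i1 := ih b
      have i2 := ih (b+1)
      rw [show 3*b+3 = 3*(b+1) from by ring]
      rw [Nat.choose_succ_succ a b]
      push_cast
      rw [i1] at *
      linear_combination i1 + i2 + (↑t1 + ↑t2) * h9

-- row-up identity
lemma rowup (n k : ℕ) : (n+1).choose k * (n+1-k) = n.choose k * (n+1) := by
  have h1 := Nat.choose_succ_right_eq (n+1) k
  have h2 := Nat.add_one_mul_choose_eq n k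
  have h2' : n.choose k * (n+1) = (n+1).choose (k+1) * (k+1) := by rw [← h2]; ring
  omega

lemma unit_solve13 {X c : Z9} (w : Z9) (h : X * (3*w+1) = c) : X = c * (6*w+1) := by
  calc X = X * ((3*w+1)*(6*w+1)) := by
          rw [show (3*w+1)*(6*w+1) = (1+3*w)*(1+6*w) from by ring, inv13, mul_one]
    _ = (X*(3*w+1))*(6*w+1) := by ring
    _ = c * (6*w+1) := by rw [h]

lemma unit_solve23 {X c : Z9} (w : Z9) (h : X * (3*w+2) = c) : X = c * (6*w+5) := by
  calc X = X * ((3*w+2)*(6*w+5)) := by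
          rw [show (3*w+2)*(6*w+5) = (2+3*w)*(5+6*w) from by ring, inv23, mul_one]
    _ = (X*(3*w+2))*(6*w+5) := by ring
    _ = c * (6*w+5) := by rw [h]

lemma chooseE1 (a b : ℕ) : (((3*a+1).choose (3*b) : ℕ) : Z9) = (1+3*(b:Z9)) * ((a.choose b : ℕ) : Z9) := by
  rcases le_or_gt b a with hba | hba
  · have h := rowup (3*a) (3*b)
    have hsub : 3*a+1-3*b = 3*(a-b)+1 := by omega
    rw [hsub] at h
    have hz := congrArg (Nat.cast : ℕ → Z9) h
    push_cast at hz
    rw [chooseJ] at hz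
    have hX := unit_solve13 ((a-b : ℕ) : Z9) hz
    have hw : ((a-b : ℕ) : Z9) = (a : Z9) - b := by
      have : a - b + b = a := by omega
      have hc := congrArg (Nat.cast : ℕ → Z9) this
      push_cast at hc; linear_combination hc
    rw [hX, hw]
    ring_nf
    linear_combination (((a.choose b : ℕ) : Z9) * (2*(a:Z9)^2 - 2*(a:Z9)*(b:Z9) + (a:Z9) - (b:Z9))) * h9
  · rw [Nat.choose_eq_zero_of_lt hba, Nat.choose_eq_zero_of_lt (by omega)]
    push_cast; ring

lemma chooseE2 (a b : ℕ) : (((3*a+2).choose (3*b) : ℕ) : Z9) = ((a.choose b : ℕ) : Z9) := by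
  rcases le_or_gt b a with hba | hba
  · have h := rowup (3*a+1) (3*b)
    have hsub : 3*a+1+1-3*b = 3*(a-b)+2 := by omega
    rw [hsub] at h
    have hz := congrArg (Nat.cast : ℕ → Z9) h
    push_cast at hz
    rw [show ((3*a+1+1).choose (3*b) : ℕ) = ((3*a+2).choose (3*b) : ℕ) from by norm_num] at hz
    rw [chooseE1] at hz
    have hX := unit_solve23 ((a-b : ℕ) : Z9) hz
    have hw : ((a-b : ℕ) : Z9) = (a : Z9) - b := by
      have : a - b + b = a := by omega
      have hc := congrArg (Nat.cast : ℕ → Z9) this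
      push_cast at hc; linear_combination hc
    rw [hX, hw]
    ring_nf
    linear_combination (((a.choose b : ℕ)) : Z9) *
      (2*(a:Z9)^2 - 2*(a:Z9)*(b:Z9) + 3*(a:Z9) + 2*(b:Z9) + 1 + 6*(a:Z9)^2*(b:Z9)
        - 6*(a:Z9)*(b:Z9)^2 + 9*(a:Z9)*(b:Z9) - 4*(b:Z9)^2) * h9
  · rw [Nat.choose_eq_zero_of_lt hba, Nat.choose_eq_zero_of_lt (by omega)]

lemma term_zero {r s : ℕ} (hr2 : 2 ≤ r) {A B : Z9} (y : Z9) (hA : A = 3 * y) :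
    A^r * B^s = 0 := by rw [hA, pow3x hr2, zero_mul]

lemma block0 {r s M K : ℕ} (hr2 : 2 ≤ r) (hK : K ≤ M) :
    (((3*M).choose (3*K) : ℕ) : Z9)^r * (((3*M + 3*K).choose (3*K) : ℕ) : Z9)^s
    + (((3*M).choose (3*K+1) : ℕ) : Z9)^r * (((3*M + (3*K+1)).choose (3*K+1) : ℕ) : Z9)^s
    + (((3*M).choose (3*K+2) : ℕ) : Z9)^r * (((3*M + (3*K+2)).choose (3*K+2) : ℕ) : Z9)^s
    = ((M.choose K : ℕ) : Z9)^r * (((M+K).choose K : ℕ) : Z9)^s := by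
  -- κ = 1 term is zero
  have h1 := Nat.choose_succ_right_eq (3*M) (3*K)
  have hsub1 : 3*M - 3*K = 3*(M-K) := by omega
  rw [hsub1] at h1
  have hz1 := congrArg (Nat.cast : ℕ → Z9) h1
  push_cast at hz1
  have hA1 := unit_solve13 (K : Z9) hz1
  have hA1' : (((3*M).choose (3*K+1) : ℕ) : Z9)
      = 3 * ((((3*M).choose (3*K) : ℕ) : Z9) * ((M-K : ℕ) : Z9) * (6*(K:Z9)+1)) := by
    rw [hA1]; ring
  -- κ = 2 term is zero
  have h2 := Nat.choose_succ_right_eq (3*M) (3*K+1)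
  have hz2 := congrArg (Nat.cast : ℕ → Z9) h2
  push_cast at hz2
  rw [show (3:Z9)*K+1+1 = 3*K+2 from by ring] at hz2
  have hA2 := unit_solve23 (K : Z9) hz2
  have hA2' : (((3*M).choose (3*K+2) : ℕ) : Z9)
      = 3 * ((((3*M).choose (3*K) : ℕ) : Z9) * ((M-K : ℕ) : Z9) * (6*(K:Z9)+1)
          * ((3*M - (3*K+1) : ℕ) : Z9) * (6*(K:Z9)+5)) := by
    rw [hA2, hA1']; ring
  rw [term_zero hr2 _ hA1', term_zero hr2 _ hA2']
  rw [show 3*M + 3*K = 3*(M+K) from by ring, chooseJ, chooseJ]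
  ring

lemma block1 {r s M K : ℕ} (hr2 : 2 ≤ r) (hr3 : r % 3 = 2) (hs6 : s % 6 = 1) (hK : K ≤ M) :
    (((3*M+1).choose (3*K) : ℕ) : Z9)^r * (((3*M+1 + 3*K).choose (3*K) : ℕ) : Z9)^s
    + (((3*M+1).choose (3*K+1) : ℕ) : Z9)^r * (((3*M+1 + (3*K+1)).choose (3*K+1) : ℕ) : Z9)^s
    + (((3*M+1).choose (3*K+2) : ℕ) : Z9)^r * (((3*M+1 + (3*K+2)).choose (3*K+2) : ℕ) : Z9)^s
    = (3+6*(M:Z9)) * (((M.choose K : ℕ) : Z9)^r * (((M+K).choose K : ℕ) : Z9)^s) := by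
  have hs3 : s % 3 = 1 := by omega
  have hw : ((M-K : ℕ) : Z9) = (M:Z9) - K := Nat.cast_sub hK
  -- κ = 0
  have e0a := chooseE1 M K
  have e0b : (((3*M+1 + 3*K).choose (3*K) : ℕ) : Z9) = (1+3*(K:Z9)) * (((M+K).choose K : ℕ) : Z9) := by
    rw [show 3*M+1+3*K = 3*(M+K)+1 from by ring]; exact chooseE1 (M+K) K
  -- κ = 1 : A1
  have h1 := Nat.choose_succ_right_eq (3*M+1) (3*K)
  have hsub1 : 3*M+1 - 3*K = 3*(M-K)+1 := by omega
  rw [hsub1] at h1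
  have hz1 := congrArg (Nat.cast : ℕ → Z9) h1
  push_cast at hz1
  rw [e0a] at hz1
  have hA1 := unit_solve13 (K : Z9) hz1
  have hA1' : (((3*M+1).choose (3*K+1) : ℕ) : Z9) = (1 + 3*((M-K : ℕ) : Z9)) * ((M.choose K : ℕ) : Z9) := by
    rw [hA1]
    linear_combination (((M.choose K : ℕ) : Z9) * ((K:Z9)+2*(K:Z9)^2) * (3*((M-K : ℕ) : Z9)+1)) * h9
  rw [hw] at hA1'
  -- κ = 1 : B1
  have hb := Nat.choose_succ_right_eq (3*(M+K)+2) (3*K)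
  have hsubb : 3*(M+K)+2 - 3*K = 3*M+2 := by omega
  rw [hsubb] at hb
  have hzb := congrArg (Nat.cast : ℕ → Z9) hb
  push_cast at hzb
  rw [chooseE2 (M+K) K] at hzb
  have hB1 := unit_solve13 (K : Z9) hzb
  have hB1' : (((3*(M+K)+2).choose (3*K+1) : ℕ) : Z9)
      = (2 + 3*(M:Z9)) * ((1 + 3*(2*(K:Z9))) * (((M+K).choose K : ℕ) : Z9)) := by
    rw [hB1]; ring
  have e1b : (((3*M+1 + (3*K+1)).choose (3*K+1) : ℕ) : Z9)
      = (2 + 3*(M:Z9)) * ((1 + 3*(2*(K:Z9))) * (((M+K).choose K : ℕ) : Z9)) := by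
    rw [show 3*M+1+(3*K+1) = 3*(M+K)+2 from by ring]; exact hB1'
  -- κ = 2 : A2 zero
  have h2 := Nat.choose_succ_right_eq (3*M+1) (3*K+1)
  have hsub2 : 3*M+1 - (3*K+1) = 3*(M-K) := by omega
  rw [hsub2] at h2
  have hz2 := congrArg (Nat.cast : ℕ → Z9) h2
  push_cast at hz2
  rw [show (3:Z9)*K+1+1 = 3*K+2 from by ring] at hz2
  rw [hw] at hz2
  rw [hA1'] at hz2
  have hA2 := unit_solve23 (K : Z9) hz2
  have hA2' : (((3*M+1).choose (3*K+2) : ℕ) : Z9)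
      = 3 * ((1 + 3*((M:Z9) - K)) * ((M.choose K : ℕ) : Z9) * ((M:Z9)-K) * (6*(K:Z9)+5)) := by
    rw [hA2]; ring
  rw [term_zero hr2 _ hA2', e0a, e0b, hA1', e1b]
  rw [mul_pow, mul_pow, mul_pow, mul_pow, mul_pow]
  rw [pow13_r hr3 (K:Z9), pow13_s hs3 (K:Z9), pow13_r hr3 ((M:Z9)-K),
    pow23_s hs6 (M:Z9), pow13_s hs3 (2*(K:Z9))]
  linear_combination ((1:Z9)*(K:Z9) - 6*(K:Z9)^2 + (M:Z9) + 8*(M:Z9)*(K:Z9) - 12*(M:Z9)*(K:Z9)^2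
    + 2*(M:Z9)^2 + 12*(M:Z9)^2*(K:Z9)) * (((M.choose K : ℕ) : Z9)^r * (((M+K).choose K : ℕ) : Z9)^s) * h9

lemma block2 {r s M K : ℕ} (hr2 : 2 ≤ r) (hr3 : r % 3 = 2) (hs6 : s % 6 = 1)
    (hcase : (s = 1 ∧ r % 6 = 2) ∨ 2 ≤ s) (hK : K ≤ M) :
    (((3*M+2).choose (3*K) : ℕ) : Z9)^r * (((3*M+2 + 3*K).choose (3*K) : ℕ) : Z9)^s
    + (((3*M+2).choose (3*K+1) : ℕ) : Z9)^r * (((3*M+2 + (3*K+1)).choose (3*K+1) : ℕ) : Z9)^s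
    + (((3*M+2).choose (3*K+2) : ℕ) : Z9)^r * (((3*M+2 + (3*K+2)).choose (3*K+2) : ℕ) : Z9)^s
    = ((M.choose K : ℕ) : Z9)^r * (((M+K).choose K : ℕ) : Z9)^s := by
  have hw : ((M-K : ℕ) : Z9) = (M:Z9) - K := Nat.cast_sub hK
  set c := ((M.choose K : ℕ) : Z9) with hc
  set c' := (((M+K).choose K : ℕ) : Z9) with hc'
  -- κ = 0
  have e0a := chooseE2 M K
  have e0b : (((3*M+2 + 3*K).choose (3*K) : ℕ) : Z9) = c' := by
    rw [show 3*M+2+3*K = 3*(M+K)+2 from by ring]; exact chooseE2 (M+K) K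
  -- A1
  have h1 := Nat.choose_succ_right_eq (3*M+2) (3*K)
  have hsub1 : 3*M+2 - 3*K = 3*(M-K)+2 := by omega
  rw [hsub1] at h1
  have hz1 := congrArg (Nat.cast : ℕ → Z9) h1
  push_cast at hz1
  rw [e0a, hw] at hz1
  have hA1 := unit_solve13 (K : Z9) hz1
  have hA1' : (((3*M+2).choose (3*K+1) : ℕ) : Z9) = (2 + 3*(M:Z9)) * c := by
    rw [hA1]
    linear_combination (c * ((K:Z9) - 2*(K:Z9)^2 + 2*(M:Z9)*(K:Z9))) * h9
  -- A2
  have h2 := Nat.choose_succ_right_eq (3*M+2) (3*K+1)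
  have hsub2 : 3*M+2 - (3*K+1) = 3*(M-K)+1 := by omega
  rw [hsub2] at h2
  have hz2 := congrArg (Nat.cast : ℕ → Z9) h2
  push_cast at hz2
  rw [show (3:Z9)*K+1+1 = 3*K+2 from by ring] at hz2
  rw [hA1', hw] at hz2
  have hA2 := unit_solve23 (K : Z9) hz2
  have hA2' : (((3*M+2).choose (3*K+2) : ℕ) : Z9) = c := by
    rw [hA2]
    linear_combination (c * (1 - 2*(K:Z9) - 4*(K:Z9)^2 + 5*(M:Z9) + (M:Z9)*(K:Z9)
      - 6*(M:Z9)*(K:Z9)^2 + 5*(M:Z9)^2 + 6*(M:Z9)^2*(K:Z9))) * h9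
  -- B1
  set e := (((M+K+1).choose K : ℕ) : Z9) with he
  have hb := Nat.choose_succ_right_eq (3*(M+K+1)) (3*K)
  have hsubb : 3*(M+K+1) - 3*K = 3*(M+1) := by omega
  rw [hsubb] at hb
  have hzb := congrArg (Nat.cast : ℕ → Z9) hb
  push_cast at hzb
  rw [chooseJ (M+K+1) K] at hzb
  have hB1 := unit_solve13 (K : Z9) hzb
  set β : Z9 := e * ((M:Z9)+1) * (6*(K:Z9)+1) with hβ
  have hB1' : (((3*(M+K+1)).choose (3*K+1) : ℕ) : Z9) = 3*β := by
    rw [hB1, hβ]; ring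
  have e1b : (((3*M+2 + (3*K+1)).choose (3*K+1) : ℕ) : Z9) = 3*β := by
    rw [show 3*M+2+(3*K+1) = 3*(M+K+1) from by ring]; exact hB1'
  -- C2 and B2
  have hcc := Nat.choose_succ_right_eq (3*(M+K+1)) (3*K+1)
  have hsubc : 3*(M+K+1) - (3*K+1) = 3*M+2 := by omega
  rw [hsubc] at hcc
  have hzc := congrArg (Nat.cast : ℕ → Z9) hcc
  push_cast at hzc
  rw [show (3:Z9)*K+1+1 = 3*K+2 from by ring] at hzc
  rw [hB1'] at hzc
  have hC2 := unit_solve23 (K : Z9) hzc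
  have hC2' : (((3*(M+K+1)).choose (3*K+2) : ℕ) : Z9) = 3*β := by
    rw [hC2]
    linear_combination (β * (3 + 4*(K:Z9) + 5*(M:Z9) + 6*(M:Z9)*(K:Z9))) * h9
  have hPas := Nat.choose_succ_succ (3*(M+K+1)) (3*K+1)
  have e2b : (((3*M+2 + (3*K+2)).choose (3*K+2) : ℕ) : Z9) = 6*β := by
    rw [show 3*M+2+(3*K+2) = 3*(M+K+1)+1 from by ring]
    have := congrArg (Nat.cast : ℕ → Z9) hPas
    push_cast at this
    rw [show ((3*(M+K+1)+1).choose (3*K+1+1) : ℕ) = ((3*(M+K+1)+1).choose (3*K+2) : ℕ) from rfl,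
      show ((3*(M+K+1)).choose (3*K+1+1) : ℕ) = ((3*(M+K+1)).choose (3*K+2) : ℕ) from rfl] at this
    rw [this, hB1', hC2']; ring
  rw [e0a, e0b, hA1', hA2', e1b, e2b]
  have key : ((2 + 3*(M:Z9)) * c)^r * (3*β)^s + c^r * (6*β)^s = 0 := by
    rcases hcase with ⟨rfl, hr6⟩ | hs2
    · rw [pow_one, pow_one, mul_pow, pow23_r2 hr6]
      linear_combination (c^r * β * (2 + (M:Z9))) * h9
    · rw [pow3x hs2 β, show (6:Z9)*β = 3*(2*β) from by ring, pow3x hs2, mul_zero, mul_zero, add_zero]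
  linear_combination key

lemma apery_cast (r s n : ℕ) : ((apery r s n : ℕ) : Z9)
    = ∑ k ∈ Finset.range (n+1), ((n.choose k : ℕ) : Z9)^r * (((n+k).choose k : ℕ) : Z9)^s := by
  unfold apery
  push_cast
  rfl

lemma sum_ext {r s : ℕ} (hr : 0 < r) (n N : ℕ) (h : n + 1 ≤ N) :
    ∑ k ∈ Finset.range (n+1), ((n.choose k : ℕ) : Z9)^r * (((n+k).choose k : ℕ) : Z9)^s
    = ∑ k ∈ Finset.range N, ((n.choose k : ℕ) : Z9)^r * (((n+k).choose k : ℕ) : Z9)^s := by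
  apply Finset.sum_subset (Finset.range_subset_range.mpr h)
  intro k _ hk
  rw [Finset.mem_range] at hk
  push_neg at hk
  rw [Nat.choose_eq_zero_of_lt (by omega)]
  push_cast
  rw [zero_pow hr.ne', zero_mul]

lemma sum_triple (N : ℕ) (F : ℕ → Z9) :
    ∑ k ∈ Finset.range (3*N), F k = ∑ K ∈ Finset.range N, (F (3*K) + F (3*K+1) + F (3*K+2)) := by
  induction N with
  | zero => simp
  | succ N ih =>
    rw [Finset.sum_range_succ, ← ih, show 3*(N+1) = (3*N+1+1)+1 from by ring,
      Finset.sum_range_succ, Finset.sum_range_succ, Finset.sum_range_succ]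
    ring_nf

lemma ap0 {r s : ℕ} (hr2 : 2 ≤ r) (M : ℕ) :
    ((apery r s (3*M) : ℕ) : Z9) = ((apery r s M : ℕ) : Z9) := by
  rw [apery_cast, apery_cast, sum_ext (by omega : 0 < r) (3*M) (3*(M+1)) (by omega), sum_triple]
  apply Finset.sum_congr rfl
  intro K hK
  rw [Finset.mem_range] at hK
  exact block0 hr2 (by omega)

lemma ap1 {r s : ℕ} (hr2 : 2 ≤ r) (hr3 : r % 3 = 2) (hs6 : s % 6 = 1) (M : ℕ) :
    ((apery r s (3*M+1) : ℕ) : Z9) = (3 + 6*(M:Z9)) * ((apery r s M : ℕ) : Z9) := by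
  rw [apery_cast, apery_cast,
    sum_ext (by omega : 0 < r) (3*M+1) (3*(M+1)) (by omega), sum_triple, Finset.mul_sum]
  apply Finset.sum_congr rfl
  intro K hK
  rw [Finset.mem_range] at hK
  exact block1 hr2 hr3 hs6 (by omega)

lemma ap2 {r s : ℕ} (hr2 : 2 ≤ r) (hr3 : r % 3 = 2) (hs6 : s % 6 = 1)
    (hcase : (s = 1 ∧ r % 6 = 2) ∨ 2 ≤ s) (M : ℕ) :
    ((apery r s (3*M+2) : ℕ) : Z9) = ((apery r s M : ℕ) : Z9) := by
  rw [apery_cast, apery_cast,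
    sum_ext (by omega : 0 < r) (3*M+2) (3*(M+1)) (by omega), sum_triple]
  apply Finset.sum_congr rfl
  intro K hK
  rw [Finset.mem_range] at hK
  exact block2 hr2 hr3 hs6 hcase (by omega)

def D (n i : ℕ) : ℕ := n / 3^i % 3

lemma D_succ (n i : ℕ) : D n (i+1) = D (n/3) i := by
  unfold D
  rw [pow_succ']
  rw [Nat.div_div_eq_div_mul]

lemma DnS (M j i : ℕ) (hj : j < 3) : D (3*M+j) (i+1) = D M i := by
  rw [D_succ]
  congr 1
  omega

lemma Dn0 (M j : ℕ) (hj : j < 3) : D (3*M+j) 0 = j := by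
  unfold D
  simp
  omega

def P1' (n : ℕ) : Prop := ∀ i, D n i ≠ 1
def P3' (n : ℕ) : Prop := ∃ p, D n p = 1 ∧ D n (p+1) = 0 ∧ ∀ i, i ≠ p → D n i ≠ 1
def P6' (n : ℕ) : Prop := ∃ p, D n p = 1 ∧ D n (p+1) = 2 ∧ ∀ i, i ≠ p → D n i ≠ 1
def P0' (n : ℕ) : Prop := ∃ p q, p ≠ q ∧ D n p = 1 ∧ D n q = 1

lemma apery_zero (r s : ℕ) : apery r s 0 = 1 := by
  simp [apery]

theorem trichotomy {r s : ℕ} (hr2 : 2 ≤ r) (hr3 : r % 3 = 2) (hs6 : s % 6 = 1)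
    (hcase : (s = 1 ∧ r % 6 = 2) ∨ 2 ≤ s) (n : ℕ) :
    (((apery r s n : ℕ) : Z9) = 1 ∧ P1' n) ∨ (((apery r s n : ℕ) : Z9) = 3 ∧ P3' n)
    ∨ (((apery r s n : ℕ) : Z9) = 6 ∧ P6' n) ∨ (((apery r s n : ℕ) : Z9) = 0 ∧ P0' n) := by
  induction n using Nat.strong_induction_on with
  | _ n ih =>
  rcases Nat.eq_zero_or_pos n with rfl | hn
  · left
    constructor
    · rw [apery_zero]; norm_num
    · intro i; unfold D; simp
  have hM : n / 3 < n := Nat.div_lt_self hn (by norm_num)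
  have IH := ih (n/3) hM
  have hsplit : n = 3*(n/3) ∨ n = 3*(n/3)+1 ∨ n = 3*(n/3)+2 := by omega
  set M := n / 3 with hMdef
  clear_value M
  have hM3 : 3*(M/3) + M%3 = M := by omega
  have hcast : (M : Z9) = 3*((M/3:ℕ):Z9) + ((M%3:ℕ):Z9) := by
    conv_lhs => rw [← hM3]
    push_cast; ring
  rcases hsplit with h | h | h
  · -- j = 0
    rw [h, ap0 hr2 M]
    have d0 : D (3*M) 0 = 0 := by
      have := Dn0 M 0 (by norm_num); simpa using this
    have dS : ∀ i, D (3*M) (i+1) = D M i := fun i => by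
      have := DnS M 0 i (by norm_num); simpa using this
    rcases IH with ⟨hA, hP⟩ | ⟨hA, hP⟩ | ⟨hA, hP⟩ | ⟨hA, hP⟩
    · left; refine ⟨hA, fun i => ?_⟩
      cases i with
      | zero => omega
      | succ i => rw [dS]; exact hP i
    · right; left
      obtain ⟨p, h1, h2, h3⟩ := hP
      refine ⟨hA, p+1, by rw [dS]; exact h1, by rw [dS]; exact h2, fun i hi => ?_⟩
      cases i with
      | zero => omega
      | succ i => rw [dS]; exact h3 i (by omega)
    · right; right; left
      obtain ⟨p, h1, h2, h3⟩ := hP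
      refine ⟨hA, p+1, by rw [dS]; exact h1, by rw [dS]; exact h2, fun i hi => ?_⟩
      cases i with
      | zero => omega
      | succ i => rw [dS]; exact h3 i (by omega)
    · right; right; right
      obtain ⟨p, q, hpq, h1, h2⟩ := hP
      exact ⟨hA, p+1, q+1, by omega, by rw [dS]; exact h1, by rw [dS]; exact h2⟩
  · -- j = 1
    rw [h, ap1 hr2 hr3 hs6 M]
    have d0 : D (3*M+1) 0 = 1 := Dn0 M 1 (by norm_num)
    have dS : ∀ i, D (3*M+1) (i+1) = D M i := fun i => DnS M 1 i (by norm_num)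
    have hcoef : (3 + 6*(M:Z9)) = 3 + 6*((M % 3 : ℕ) : Z9) := by
      rw [hcast]
      linear_combination (2*((M/3 : ℕ) : Z9)) * h9
    have hd1 : D M 0 = M % 3 := by unfold D; simp
    rcases (show M % 3 = 0 ∨ M % 3 = 1 ∨ M % 3 = 2 from by omega) with h3 | h3 | h3
    · -- digit above is 0
      rw [h3] at hcoef
      rw [hcoef, show (3 + 6*((0:ℕ):Z9)) = 3 from by decide]
      rcases IH with ⟨hA, hP⟩ | ⟨hA, hP⟩ | ⟨hA, hP⟩ | ⟨hA, hP⟩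
      · right; left
        refine ⟨by rw [hA]; ring, 0, d0, by rw [dS, hd1, h3], fun i hi => ?_⟩
        cases i with
        | zero => omega
        | succ i => rw [dS]; exact hP i
      · right; right; right
        obtain ⟨p, h1, _, _⟩ := hP
        exact ⟨by rw [hA]; decide, 0, p+1, by omega, d0, by rw [dS]; exact h1⟩
      · right; right; right
        obtain ⟨p, h1, _, _⟩ := hP
        exact ⟨by rw [hA]; decide, 0, p+1, by omega, d0, by rw [dS]; exact h1⟩
      · right; right; right
        obtain ⟨p, q, _, h1, _⟩ := hP
        exact ⟨by rw [hA]; ring, 0, p+1, by omega, d0, by rw [dS]; exact h1⟩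
    · -- digit above is 1 : coefficient 9 ≡ 0
      rw [h3] at hcoef
      rw [hcoef, show (3 + 6*((1:ℕ):Z9)) = 0 from by decide]
      right; right; right
      refine ⟨by ring, 0, 1, by omega, d0, ?_⟩
      rw [dS, hd1, h3]
    · -- digit above is 2 : coefficient 6
      rw [h3] at hcoef
      rw [hcoef, show (3 + 6*((2:ℕ):Z9)) = 6 from by decide]
      rcases IH with ⟨hA, hP⟩ | ⟨hA, hP⟩ | ⟨hA, hP⟩ | ⟨hA, hP⟩
      · right; right; left
        refine ⟨by rw [hA]; ring, 0, d0, by rw [dS, hd1, h3], fun i hi => ?_⟩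
        cases i with
        | zero => omega
        | succ i => rw [dS]; exact hP i
      · right; right; right
        obtain ⟨p, h1, _, _⟩ := hP
        exact ⟨by rw [hA]; decide, 0, p+1, by omega, d0, by rw [dS]; exact h1⟩
      · right; right; right
        obtain ⟨p, h1, _, _⟩ := hP
        exact ⟨by rw [hA]; decide, 0, p+1, by omega, d0, by rw [dS]; exact h1⟩
      · right; right; right
        obtain ⟨p, q, _, h1, _⟩ := hP
        exact ⟨by rw [hA]; ring, 0, p+1, by omega, d0, by rw [dS]; exact h1⟩
  · -- j = 2
    rw [h, ap2 hr2 hr3 hs6 hcase M]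
    have d0 : D (3*M+2) 0 = 2 := Dn0 M 2 (by norm_num)
    have dS : ∀ i, D (3*M+2) (i+1) = D M i := fun i => DnS M 2 i (by norm_num)
    rcases IH with ⟨hA, hP⟩ | ⟨hA, hP⟩ | ⟨hA, hP⟩ | ⟨hA, hP⟩
    · left; refine ⟨hA, fun i => ?_⟩
      cases i with
      | zero => omega
      | succ i => rw [dS]; exact hP i
    · right; left
      obtain ⟨p, h1, h2, h3⟩ := hP
      refine ⟨hA, p+1, by rw [dS]; exact h1, by rw [dS]; exact h2, fun i hi => ?_⟩
      cases i with
      | zero => omega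
      | succ i => rw [dS]; exact h3 i (by omega)
    · right; right; left
      obtain ⟨p, h1, h2, h3⟩ := hP
      refine ⟨hA, p+1, by rw [dS]; exact h1, by rw [dS]; exact h2, fun i hi => ?_⟩
      cases i with
      | zero => omega
      | succ i => rw [dS]; exact h3 i (by omega)
    · right; right; right
      obtain ⟨p, q, hpq, h1, h2⟩ := hP
      exact ⟨hA, p+1, q+1, by omega, by rw [dS]; exact h1, by rw [dS]; exact h2⟩

lemma rep (j : ℕ) : ∀ (m : ℕ) (d : ℕ → ℕ), (∀ i, d i ≤ 2) →
    D (∑ i ∈ Finset.range (m+1), d i * 3^i) j = if j ≤ m then d j else 0 := by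
  induction j with
  | zero =>
    intro m d hd2
    have hsplit := Finset.sum_range_succ' (fun i => d i * 3^i) m
    have hT : ∑ i ∈ Finset.range m, d (i+1) * 3^(i+1) = 3 * ∑ i ∈ Finset.range m, d (i+1) * 3^i := by
      rw [Finset.mul_sum]
      apply Finset.sum_congr rfl
      intro i _
      rw [pow_succ']
      ring
    rw [hT] at hsplit
    unfold D
    simp only [pow_zero, Nat.div_one, if_pos (Nat.zero_le m)]
    have h2 := hd2 0
    omega
  | succ j ihj =>
    intro m d hd2
    have hsplit := Finset.sum_range_succ' (fun i => d i * 3^i) m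
    have hT : ∑ i ∈ Finset.range m, d (i+1) * 3^(i+1) = 3 * ∑ i ∈ Finset.range m, d (i+1) * 3^i := by
      rw [Finset.mul_sum]
      apply Finset.sum_congr rfl
      intro i _
      rw [pow_succ']
      ring
    rw [hT] at hsplit
    rw [D_succ]
    have hdiv : (∑ i ∈ Finset.range (m+1), d i * 3^i) / 3
        = ∑ i ∈ Finset.range m, d (i+1) * 3^i := by
      have h2 := hd2 0
      omega
    rw [hdiv]
    cases m with
    | zero =>
      simp only [Finset.range_zero, Finset.sum_empty]
      unfold D
      simp
    | succ m' =>
      have := ihj m' (fun i => d (i+1)) (fun i => hd2 (i+1))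
      rw [this]
      by_cases hj : j ≤ m' <;> simp [hj] <;> omega

lemma Q1_iff {d : ℕ → ℕ} {m : ℕ} (hd2 : ∀ i, d i ≤ 2) (hd0 : ∀ i, m < i → d i = 0) :
    (∀ i, d i ≠ 1) ↔ (∀ i ≤ m, d i = 0 ∨ d i = 2) := by
  constructor
  · intro h i hi
    have := h i
    have := hd2 i
    omega
  · intro h i
    rcases le_or_gt i m with hi | hi
    · have := h i hi; omega
    · have := hd0 i hi; omega

lemma Q6_iff {d : ℕ → ℕ} {m : ℕ} (hd2 : ∀ i, d i ≤ 2) (hd0 : ∀ i, m < i → d i = 0) :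
    (∃ p, d p = 1 ∧ d (p+1) = 2 ∧ ∀ i, i ≠ p → d i ≠ 1) ↔ uniqueOcc d m 2 1 := by
  constructor
  · rintro ⟨p, h1, h2, h3⟩
    have hpm : p ≤ m := by
      by_contra hc
      exact absurd (hd0 p (by omega)) (by omega)
    have hfil : (Finset.Icc 1 (m+1)).filter (fun ν => d ν = 2 ∧ d (ν-1) = 1) = {p+1} := by
      apply Finset.eq_singleton_iff_unique_mem.mpr
      constructor
      · rw [Finset.mem_filter, Finset.mem_Icc]
        refine ⟨⟨by omega, by omega⟩, h2, by simpa using h1⟩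
      · intro ν hν
        rw [Finset.mem_filter, Finset.mem_Icc] at hν
        obtain ⟨⟨hν1, _⟩, _, hνd⟩ := hν
        have : ν - 1 = p := by
          by_contra hc
          exact h3 (ν-1) hc hνd
        omega
    constructor
    · unfold occ
      rw [hfil]
      simp
    · intro ν hν ⟨hν2, hν1⟩ i him hiν hiν1
      rw [Finset.mem_Icc] at hν
      have hνp : ν - 1 = p := by
        by_contra hc
        exact h3 (ν-1) hc hν1
      have : i ≠ p := by omega
      have := h3 i this
      have := hd2 i
      omega
  · rintro ⟨hocc, hside⟩
    unfold occ at hocc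
    obtain ⟨ν, hν⟩ := Finset.card_eq_one.mp hocc
    have hmem : ν ∈ (Finset.Icc 1 (m+1)).filter (fun ν => d ν = 2 ∧ d (ν-1) = 1) := by
      rw [hν]; exact Finset.mem_singleton_self ν
    rw [Finset.mem_filter, Finset.mem_Icc] at hmem
    obtain ⟨⟨hν1, hν2⟩, hd2', hd1'⟩ := hmem
    refine ⟨ν-1, hd1', by rw [show ν-1+1 = ν from by omega]; exact hd2', ?_⟩
    intro i hip hi1
    rcases le_or_gt i m with him | him
    · rcases eq_or_ne i ν with rfl | hiν
      · omega
      · have := hside ν (Finset.mem_Icc.mpr ⟨hν1, hν2⟩) ⟨hd2', hd1'⟩ i him hiν hip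
        omega
    · have := hd0 i him
      omega

lemma Q3_iff {d : ℕ → ℕ} {m : ℕ} (hd2 : ∀ i, d i ≤ 2) (hd0 : ∀ i, m < i → d i = 0) :
    (∃ p, d p = 1 ∧ d (p+1) = 0 ∧ ∀ i, i ≠ p → d i ≠ 1) ↔
      (uniqueOcc d m 0 1 ∧ occ d m 1 1 = 0 ∧ occ d m 2 1 = 0) := by
  constructor
  · rintro ⟨p, h1, h2, h3⟩
    have hpm : p ≤ m := by
      by_contra hc
      exact absurd (hd0 p (by omega)) (by omega)
    have hfil : (Finset.Icc 1 (m+1)).filter (fun ν => d ν = 0 ∧ d (ν-1) = 1) = {p+1} := by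
      apply Finset.eq_singleton_iff_unique_mem.mpr
      constructor
      · rw [Finset.mem_filter, Finset.mem_Icc]
        refine ⟨⟨by omega, by omega⟩, h2, by simpa using h1⟩
      · intro ν hν
        rw [Finset.mem_filter, Finset.mem_Icc] at hν
        obtain ⟨⟨hν1, _⟩, _, hνd⟩ := hν
        have : ν - 1 = p := by
          by_contra hc
          exact h3 (ν-1) hc hνd
        omega
    refine ⟨⟨by unfold occ; rw [hfil]; simp, ?_⟩, ?_, ?_⟩
    · intro ν hν ⟨hν2, hν1⟩ i him hiν hiν1
      rw [Finset.mem_Icc] at hν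
      have hνp : ν - 1 = p := by
        by_contra hc
        exact h3 (ν-1) hc hν1
      have : i ≠ p := by omega
      have := h3 i this
      have := hd2 i
      omega
    · unfold occ
      rw [Finset.card_eq_zero, Finset.filter_eq_empty_iff]
      rintro ν hν ⟨ha, hb⟩
      rw [Finset.mem_Icc] at hν
      have h4 : ν - 1 = p := by
        by_contra hc
        exact h3 (ν-1) hc hb
      have h5 : ν = p := by
        by_contra hc
        exact h3 ν hc ha
      omega
    · unfold occ
      rw [Finset.card_eq_zero, Finset.filter_eq_empty_iff]
      rintro ν hν ⟨ha, hb⟩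
      rw [Finset.mem_Icc] at hν
      have h4 : ν - 1 = p := by
        by_contra hc
        exact h3 (ν-1) hc hb
      have hvp : ν = p + 1 := by omega
      rw [hvp] at ha
      omega
  · rintro ⟨⟨hocc, hside⟩, _, _⟩
    unfold occ at hocc
    obtain ⟨ν, hν⟩ := Finset.card_eq_one.mp hocc
    have hmem : ν ∈ (Finset.Icc 1 (m+1)).filter (fun ν => d ν = 0 ∧ d (ν-1) = 1) := by
      rw [hν]; exact Finset.mem_singleton_self ν
    rw [Finset.mem_filter, Finset.mem_Icc] at hmem
    obtain ⟨⟨hν1, hν2⟩, hd2', hd1'⟩ := hmem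
    refine ⟨ν-1, hd1', by rw [show ν-1+1 = ν from by omega]; exact hd2', ?_⟩
    intro i hip hi1
    rcases le_or_gt i m with him | him
    · rcases eq_or_ne i ν with rfl | hiν
      · omega
      · have := hside ν (Finset.mem_Icc.mpr ⟨hν1, hν2⟩) ⟨hd2', hd1'⟩ i him hiν hip
        omega
    · have := hd0 i him
      omega


/-- Apéry numbers mod 9 for `r ≡ 2 (mod 6)`, `s ≡ 1 (mod 6)`, or
`r ≡ 5 (mod 6)`, `s ≡ 1 (mod 6)`, `s ≥ 7` (covering the classical case `a_n(2,1)`). -/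
theorem apery_mod_nine_r2_s1 (r s : ℕ) (hr : 0 < r) (hs : 0 < s)
    (hrs : (r % 6 = 2 ∧ s % 6 = 1) ∨ (r % 6 = 5 ∧ s % 6 = 1 ∧ 7 ≤ s))
    (n m : ℕ) (d : ℕ → ℕ) (hd2 : ∀ i, d i ≤ 2) (hd0 : ∀ i, m < i → d i = 0)
    (hn : n = ∑ i ∈ Finset.range (m + 1), d i * 3 ^ i) :
    (apery r s n ≡ 1 [MOD 9] ↔ (∀ i ≤ m, d i = 0 ∨ d i = 2)) ∧
    (apery r s n ≡ 3 [MOD 9] ↔ (uniqueOcc d m 0 1 ∧ occ d m 1 1 = 0 ∧ occ d m 2 1 = 0)) ∧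
    (apery r s n ≡ 6 [MOD 9] ↔ (uniqueOcc d m 2 1)) ∧
    (¬ (∀ i ≤ m, d i = 0 ∨ d i = 2) ∧ ¬ (uniqueOcc d m 0 1 ∧ occ d m 1 1 = 0 ∧ occ d m 2 1 = 0) ∧ ¬ (uniqueOcc d m 2 1) → 9 ∣ apery r s n) ∧
    ¬ (apery r s n ≡ 2 [MOD 9]) ∧
    ¬ (apery r s n ≡ 4 [MOD 9]) ∧
    ¬ (apery r s n ≡ 5 [MOD 9]) ∧
    ¬ (apery r s n ≡ 7 [MOD 9]) ∧
    ¬ (apery r s n ≡ 8 [MOD 9]) := by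
  have hr2 : 2 ≤ r := by omega
  have hr3 : r % 3 = 2 := by omega
  have hs6 : s % 6 = 1 := by rcases hrs with ⟨_, h⟩ | ⟨_, h, _⟩ <;> exact h
  have hcase : (s = 1 ∧ r % 6 = 2) ∨ 2 ≤ s := by omega
  have hDj : ∀ j, D n j = d j := by
    intro j
    rw [hn, rep j m d hd2]
    rcases le_or_gt j m with h | h
    · simp [h]
    · simp [Nat.not_le.mpr h, (hd0 j h).symm]
  have htri := trichotomy hr2 hr3 hs6 hcase n
  simp only [P1', P3', P6', P0', hDj] at htri
  have conv : ∀ v : ℕ, v < 9 → ((apery r s n : ℕ) : Z9) = ((v : ℕ) : Z9) →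
      apery r s n % 9 = v := by
    intro v hv h
    rw [ZMod.natCast_eq_natCast_iff] at h
    unfold Nat.ModEq at h
    omega
  rcases htri with ⟨hA, hP⟩ | ⟨hA, hP⟩ | ⟨hA, hP⟩ | ⟨hA, hP⟩
  · -- value 1
    have hv : apery r s n % 9 = 1 := conv 1 (by norm_num) (by rw [hA]; norm_num)
    have hC1 : ∀ i ≤ m, d i = 0 ∨ d i = 2 := (Q1_iff hd2 hd0).mp hP
    refine ⟨iff_of_true (by unfold Nat.ModEq; omega) hC1,
      iff_of_false (by unfold Nat.ModEq; omega) ?_,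
      iff_of_false (by unfold Nat.ModEq; omega) ?_,
      fun ⟨h1, _, _⟩ => absurd hC1 h1,
      by unfold Nat.ModEq; omega, by unfold Nat.ModEq; omega, by unfold Nat.ModEq; omega,
      by unfold Nat.ModEq; omega, by unfold Nat.ModEq; omega⟩
    · intro hC3
      obtain ⟨p, hp1, _, _⟩ := (Q3_iff hd2 hd0).mpr hC3
      exact hP p hp1
    · intro hC6
      obtain ⟨p, hp1, _, _⟩ := (Q6_iff hd2 hd0).mpr hC6
      exact hP p hp1
  · -- value 3
    have hv : apery r s n % 9 = 3 := conv 3 (by norm_num) (by rw [hA]; norm_num)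
    have hC3 := (Q3_iff hd2 hd0).mp hP
    obtain ⟨p, hp1, hp2, hp3⟩ := hP
    refine ⟨iff_of_false (by unfold Nat.ModEq; omega) ?_,
      iff_of_true (by unfold Nat.ModEq; omega) hC3,
      iff_of_false (by unfold Nat.ModEq; omega) ?_,
      fun ⟨_, h2, _⟩ => absurd hC3 h2,
      by unfold Nat.ModEq; omega, by unfold Nat.ModEq; omega, by unfold Nat.ModEq; omega,
      by unfold Nat.ModEq; omega, by unfold Nat.ModEq; omega⟩
    · intro hC1
      exact ((Q1_iff hd2 hd0).mpr hC1) p hp1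
    · intro hC6
      obtain ⟨q, hq1, hq2, hq3⟩ := (Q6_iff hd2 hd0).mpr hC6
      have : q = p := by
        by_contra hc
        exact hp3 q hc hq1
      rw [this] at hq2
      omega
  · -- value 6
    have hv : apery r s n % 9 = 6 := conv 6 (by norm_num) (by rw [hA]; norm_num)
    have hC6 := (Q6_iff hd2 hd0).mp hP
    obtain ⟨p, hp1, hp2, hp3⟩ := hP
    refine ⟨iff_of_false (by unfold Nat.ModEq; omega) ?_,
      iff_of_false (by unfold Nat.ModEq; omega) ?_,
      iff_of_true (by unfold Nat.ModEq; omega) hC6,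
      fun ⟨_, _, h3⟩ => absurd hC6 h3,
      by unfold Nat.ModEq; omega, by unfold Nat.ModEq; omega, by unfold Nat.ModEq; omega,
      by unfold Nat.ModEq; omega, by unfold Nat.ModEq; omega⟩
    · intro hC1
      exact ((Q1_iff hd2 hd0).mpr hC1) p hp1
    · intro hC3
      obtain ⟨q, hq1, hq2, hq3⟩ := (Q3_iff hd2 hd0).mpr hC3
      have : q = p := by
        by_contra hc
        exact hp3 q hc hq1
      rw [this] at hq2
      omega
  · -- value 0
    have hv : apery r s n % 9 = 0 := conv 0 (by norm_num) (by rw [hA]; norm_num)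
    obtain ⟨p, q, hpq, hp1, hq1⟩ := hP
    refine ⟨iff_of_false (by unfold Nat.ModEq; omega) ?_,
      iff_of_false (by unfold Nat.ModEq; omega) ?_,
      iff_of_false (by unfold Nat.ModEq; omega) ?_,
      fun _ => by omega,
      by unfold Nat.ModEq; omega, by unfold Nat.ModEq; omega, by unfold Nat.ModEq; omega,
      by unfold Nat.ModEq; omega, by unfold Nat.ModEq; omega⟩
    · intro hC1
      exact ((Q1_iff hd2 hd0).mpr hC1) p hp1
    · intro hC3
      obtain ⟨t, ht1, ht2, ht3⟩ := (Q3_iff hd2 hd0).mpr hC3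
      have h1 : p = t := by
        by_contra hc
        exact ht3 p hc hp1
      have h2 : q = t := by
        by_contra hc
        exact ht3 q hc hq1
      omega
    · intro hC6
      obtain ⟨t, ht1, ht2, ht3⟩ := (Q6_iff hd2 hd0).mpr hC6
      have h1 : p = t := by
        by_contra hc
        exact ht3 p hc hp1
      have h2 : q = t := by
        by_contra hc
        exact ht3 q hc hq1
      omega
end
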